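/- arXiv:1712.01241 — 11 statements merged into one kernel-verified Lean document; each statement's English description precedes it below -/
import Mathlib

section
/- The number of mistakes made by the perceptron algorithm on any sequence of labeled points consistent with a linear threshold function through the origin is at most (1/γ)², where γ is the minimum over all points y_i of |⟨y_i, w*⟩|/(‖y_i‖‖w*‖) for the true separator w*. -/
open RealInnerProductSpace Finset

open Classical in
/-- Perceptron mistake bound: on any sequence of labeled points consistent with a
linear threshold function through the origin, the number of mistakes is at most `(1/γ)²`. -/
theorem perceptron_mistake_bound {d n : ℕ} (hn : 0 < n)
    (y : Fin n → EuclideanSpace ℝ (Fin d)) (ℓ : Fin n → ℝ)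
    (wstar : EuclideanSpace ℝ (Fin d)) (γ : ℝ)
    (hy : ∀ i, y i ≠ 0) (hwstar : wstar ≠ 0)
    (hℓ : ∀ i, ℓ i = 1 ∨ ℓ i = -1)
    (hsep : ∀ i, 0 < ℓ i * ⟪y i, wstar⟫)
    (hγ : IsLeast {t : ℝ | ∃ i : Fin n, t = |⟪y i, wstar⟫| / (‖y i‖ * ‖wstar‖)} γ)
    (z : ℕ → Fin n) (w : ℕ → EuclideanSpace ℝ (Fin d))
    (hw0 : w 0 = 0)
    (hwrec : ∀ t : ℕ, w (t + 1) =
      if ℓ (z t) * ⟪y (z t), w t⟫ ≤ 0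
      then w t + (ℓ (z t) / ‖y (z t)‖) • y (z t) else w t)
    (T : ℕ) :
    (((Finset.range T).filter
        (fun t => ℓ (z t) * ⟪y (z t), w t⟫ ≤ 0)).card : ℝ) ≤ (1 / γ) ^ 2 := by
  have hws : 0 < ‖wstar‖ := norm_pos_iff.mpr hwstar
  have hyn : ∀ i, (0:ℝ) < ‖y i‖ := fun i => norm_pos_iff.mpr (hy i)
  -- γ > 0
  have hγpos : 0 < γ := by
    obtain ⟨i, hi⟩ := hγ.1
    rw [hi]
    apply div_pos _ (mul_pos (hyn i) hws)
    have := hsep i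
    rcases hℓ i with h | h <;> rw [h] at this <;> simp at this <;>
      [exact abs_pos.mpr (ne_of_gt this); exact abs_pos.mpr (ne_of_lt this)]
  -- lower bound on margin at each point
  have hmargin : ∀ i, γ * ‖wstar‖ ≤ ℓ i * ⟪y i, wstar⟫ / ‖y i‖ := by
    intro i
    have hle : γ ≤ |⟪y i, wstar⟫| / (‖y i‖ * ‖wstar‖) := hγ.2 ⟨i, rfl⟩
    have habs : ℓ i * ⟪y i, wstar⟫ = |⟪y i, wstar⟫| := by
      have hp := hsep i
      rcases hℓ i with h | h <;> rw [h] at hp ⊢ <;> simp at hp ⊢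
      · exact (abs_of_pos hp).symm
      · rw [abs_of_neg hp]
    rw [habs]
    rw [div_mul_eq_div_div] at hle
    calc γ * ‖wstar‖ ≤ (|⟪y i, wstar⟫| / ‖y i‖ / ‖wstar‖) * ‖wstar‖ := by
          exact mul_le_mul_of_nonneg_right hle hws.le
      _ = |⟪y i, wstar⟫| / ‖y i‖ := div_mul_cancel₀ _ hws.ne'
  set M : ℕ → ℝ := fun t => (((Finset.range t).filter
      (fun t => ℓ (z t) * ⟪y (z t), w t⟫ ≤ 0)).card : ℝ) with hM
  have hMsucc : ∀ t : ℕ, M (t+1) = if ℓ (z t) * ⟪y (z t), w t⟫ ≤ 0 then M t + 1 else M t := by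
    intro t
    simp only [hM, Finset.range_add_one, Finset.filter_insert]
    split <;> [rw [Finset.card_insert_of_notMem (by simp [Finset.mem_filter])]; rfl] <;> push_cast <;> ring
  -- two invariants
  have key : ∀ t : ℕ, γ * ‖wstar‖ * M t ≤ ⟪w t, wstar⟫ ∧ ‖w t‖^2 ≤ M t := by
    intro t
    induction t with
    | zero => simp [hw0, hM]
    | succ t ih =>
      obtain ⟨ihA, ihB⟩ := ih
      rw [hwrec t, hMsucc t]
      by_cases hmis : ℓ (z t) * ⟪y (z t), w t⟫ ≤ 0
      · simp only [if_pos hmis]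
        constructor
        · rw [inner_add_left, real_inner_smul_left, mul_add, mul_one]
          have := hmargin (z t)
          have h2 : γ * ‖wstar‖ ≤ ℓ (z t) / ‖y (z t)‖ * ⟪y (z t), wstar⟫ := by
            calc γ * ‖wstar‖ ≤ ℓ (z t) * ⟪y (z t), wstar⟫ / ‖y (z t)‖ := this
              _ = ℓ (z t) / ‖y (z t)‖ * ⟪y (z t), wstar⟫ := by ring
          linarith
        · rw [norm_add_sq_real]
          have h1 : ⟪w t, (ℓ (z t) / ‖y (z t)‖) • y (z t)⟫ ≤ 0 := by
            rw [real_inner_smul_right]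
            have hyp := (hyn (z t))
            have : ℓ (z t) * ⟪w t, y (z t)⟫ ≤ 0 := by
              rw [real_inner_comm]; linarith [hmis]
            have := div_nonpos_of_nonpos_of_nonneg this hyp.le
            calc ℓ (z t) / ‖y (z t)‖ * ⟪w t, y (z t)⟫
                = ℓ (z t) * ⟪w t, y (z t)⟫ / ‖y (z t)‖ := by ring
              _ ≤ 0 := this
          have h2 : ‖(ℓ (z t) / ‖y (z t)‖) • y (z t)‖^2 = 1 := by
            rw [norm_smul]
            have hl1 : |ℓ (z t)| = 1 := by rcases hℓ (z t) with h | h <;> simp [h]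
            rw [Real.norm_eq_abs, abs_div, hl1, abs_norm]
            rw [one_div_mul_cancel (hyn (z t)).ne', one_pow]
          rw [h2]
          linarith
      · simp only [if_neg hmis]
        exact ⟨ihA, ihB⟩
  obtain ⟨hA, hB⟩ := key T
  have hMnn : 0 ≤ M T := Nat.cast_nonneg _
  -- γ * M T ≤ ‖w T‖
  have hcs : ⟪w T, wstar⟫ ≤ ‖w T‖ * ‖wstar‖ := real_inner_le_norm _ _
  have h3 : γ * M T ≤ ‖w T‖ := by
    have : γ * ‖wstar‖ * M T ≤ ‖w T‖ * ‖wstar‖ := le_trans hA hcs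
    have h4 : γ * M T * ‖wstar‖ ≤ ‖w T‖ * ‖wstar‖ := by linarith [this]
    exact le_of_mul_le_mul_right h4 hws
  have h5 : (γ * M T)^2 ≤ M T := by
    calc (γ * M T)^2 ≤ ‖w T‖^2 := by
          apply sq_le_sq' _ h3
          have : 0 ≤ γ * M T := mul_nonneg hγpos.le hMnn
          linarith [norm_nonneg (w T)]
      _ ≤ M T := hB
  -- conclude
  rcases eq_or_lt_of_le hMnn with h | h
  · show M T ≤ (1/γ)^2
    rw [← h]; positivity
  · have : γ^2 * M T ≤ 1 := by
      have := h5
      rw [mul_pow] at this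
      nlinarith
    rw [div_pow, one_pow, le_div_iff₀ (by positivity)]
    linarith
end

section
/- If a set of labeled points is linearly separable through the origin with angular margin γ, then there exists a multiset M of the points of size at most (1/γ)² such that the vector w = Σ_{y∈M} ℓ(y)·y/‖y‖ correctly classifies every point, i.e., sgn(⟨w, y_i⟩) = ℓ(y_i) for all i. -/
open RealInnerProductSpace Finset

set_option maxHeartbeats 1000000 in
/-- If labeled points are linearly separable through the origin with angular margin `γ`,
there is a multiset `M` of the points of size at most `(1/γ)²` such that
`w = Σ_{y∈M} ℓ(y)·y/‖y‖` correctly classifies every point. -/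
theorem perceptron_direction_exists {d n : ℕ} (hn : 0 < n)
    (y : Fin n → EuclideanSpace ℝ (Fin d)) (ℓ : Fin n → ℝ)
    (wstar : EuclideanSpace ℝ (Fin d)) (γ : ℝ)
    (hy : ∀ i, y i ≠ 0) (hwstar : ‖wstar‖ = 1)
    (hℓ : ∀ i, ℓ i = 1 ∨ ℓ i = -1)
    (hsep : ∀ i, 0 < ℓ i * ⟪y i, wstar⟫)
    (hγ : IsLeast {t : ℝ | ∃ i : Fin n, t = |⟪y i, wstar⟫| / ‖y i‖} γ)
    (hγpos : 0 < γ) :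
    ∃ f : Fin n → ℕ, ((∑ i, f i : ℕ) : ℝ) ≤ (1 / γ) ^ 2 ∧
      ∀ i : Fin n, 0 < ℓ i * ⟪∑ j, (f j : ℝ) • ((ℓ j / ‖y j‖) • y j), y i⟫ := by
  classical
  set z : Fin n → EuclideanSpace ℝ (Fin d) := fun j => (ℓ j / ‖y j‖) • y j with hzdef
  set w : (Fin n → ℕ) → EuclideanSpace ℝ (Fin d) := fun f => ∑ j, (f j : ℝ) • z j with hwdef
  have hyn : ∀ j, (0:ℝ) < ‖y j‖ := fun j => norm_pos_iff.mpr (hy j)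
  have habs : ∀ j, |ℓ j| = 1 := by
    intro j; rcases hℓ j with h | h <;> simp [h]
  have hznorm : ∀ j, ‖z j‖ = 1 := by
    intro j
    rw [hzdef]
    simp only [norm_smul]
    rw [Real.norm_eq_abs, abs_div, habs j, abs_norm]
    rw [one_div, inv_mul_cancel₀ (hyn j).ne']
  have hzw : ∀ j, γ ≤ ⟪z j, wstar⟫ := by
    intro j
    have h1 : ⟪z j, wstar⟫ = (ℓ j * ⟪y j, wstar⟫) / ‖y j‖ := by
      rw [hzdef]
      simp only [real_inner_smul_left]
      ring
    have h2 : ℓ j * ⟪y j, wstar⟫ = |⟪y j, wstar⟫| := by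
      rcases hℓ j with h | h
      · rw [h, one_mul, abs_of_pos]; have := hsep j; rw [h, one_mul] at this; exact this
      · have := hsep j; rw [h] at this
        rw [h, abs_of_neg (by linarith)]; ring
    rw [h1, h2]
    exact hγ.2 ⟨j, rfl⟩
  -- the classification bound: invariant implies size bound
  have hbound : ∀ f : Fin n → ℕ,
      ‖w f‖ ^ 2 ≤ ((∑ i, f i : ℕ) : ℝ) →
      γ * ((∑ i, f i : ℕ) : ℝ) ≤ ⟪w f, wstar⟫ →
      ((∑ i, f i : ℕ) : ℝ) ≤ (1 / γ) ^ 2 := by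
    intro f h1 h2
    set m : ℝ := ((∑ i, f i : ℕ) : ℝ) with hm
    have hm0 : 0 ≤ m := Nat.cast_nonneg _
    have h3 : ⟪w f, wstar⟫ ≤ ‖w f‖ := by
      have := real_inner_le_norm (w f) wstar
      rwa [hwstar, mul_one] at this
    have h4 : (γ * m) ^ 2 ≤ ‖w f‖ ^ 2 := by
      have hnn : 0 ≤ γ * m := mul_nonneg hγpos.le hm0
      nlinarith [norm_nonneg (w f)]
    have h5 : γ ^ 2 * m ^ 2 ≤ m := by nlinarith
    rcases eq_or_lt_of_le hm0 with h | h
    · rw [← h]; positivity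
    · rw [div_pow, one_pow, le_div_iff₀ (by positivity)]
      nlinarith
  -- update step
  have key : ∀ k : ℕ, ∀ f : Fin n → ℕ,
      ‖w f‖ ^ 2 ≤ ((∑ i, f i : ℕ) : ℝ) →
      γ * ((∑ i, f i : ℕ) : ℝ) ≤ ⟪w f, wstar⟫ →
      (1 / γ) ^ 2 ≤ ((∑ i, f i : ℕ) : ℝ) + k →
      ∃ g : Fin n → ℕ, ((∑ i, g i : ℕ) : ℝ) ≤ (1 / γ) ^ 2 ∧
        ∀ i : Fin n, 0 < ℓ i * ⟪w g, y i⟫ := by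
    intro k
    induction k with
    | zero =>
      intro f h1 h2 h3
      by_cases hc : ∀ i : Fin n, 0 < ℓ i * ⟪w f, y i⟫
      · exact ⟨f, hbound f h1 h2, hc⟩
      · push_neg at hc
        obtain ⟨i, hi⟩ := hc
        set g : Fin n → ℕ := fun j => f j + if j = i then 1 else 0 with hgdef
        have hsum : ((∑ j, g j : ℕ) : ℝ) = ((∑ j, f j : ℕ) : ℝ) + 1 := by
          rw [hgdef]; push_cast [Finset.sum_add_distrib]; simp
        have hwg : w g = w f + z i := by
          rw [hwdef, hgdef]
          simp only [Nat.cast_add, add_smul, Finset.sum_add_distrib]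
          congr 1
          rw [Finset.sum_congr rfl (fun j _ => by
            rw [show ((if j = i then 1 else 0 : ℕ) : ℝ) = if j = i then (1:ℝ) else 0 by
              split <;> simp, ite_smul, one_smul, zero_smul])]
          simp
        have hinner : ⟪w f, z i⟫ ≤ 0 := by
          have : ⟪w f, z i⟫ = (ℓ i * ⟪w f, y i⟫) / ‖y i‖ := by
            rw [hzdef]; simp only [real_inner_smul_right]; ring
          rw [this]
          exact div_nonpos_of_nonpos_of_nonneg hi (hyn i).le
        have hg1 : ‖w g‖ ^ 2 ≤ ((∑ j, g j : ℕ) : ℝ) := by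
          rw [hwg, hsum, norm_add_sq_real, hznorm i, one_pow]
          linarith
        have hg2 : γ * ((∑ j, g j : ℕ) : ℝ) ≤ ⟪w g, wstar⟫ := by
          rw [hwg, hsum, inner_add_left]
          have h5 := hzw i
          have h6 : γ * (((∑ j, f j : ℕ) : ℝ) + 1) = γ * ((∑ j, f j : ℕ) : ℝ) + γ := by ring
          rw [h6]
          exact add_le_add h2 h5
        have := hbound g hg1 hg2
        rw [hsum] at this
        simp only [Nat.cast_zero, add_zero] at h3
        linarith
    | succ k ih =>
      intro f h1 h2 h3
      by_cases hc : ∀ i : Fin n, 0 < ℓ i * ⟪w f, y i⟫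
      · exact ⟨f, hbound f h1 h2, hc⟩
      · push_neg at hc
        obtain ⟨i, hi⟩ := hc
        set g : Fin n → ℕ := fun j => f j + if j = i then 1 else 0 with hgdef
        have hsum : ((∑ j, g j : ℕ) : ℝ) = ((∑ j, f j : ℕ) : ℝ) + 1 := by
          rw [hgdef]; push_cast [Finset.sum_add_distrib]; simp
        have hwg : w g = w f + z i := by
          rw [hwdef, hgdef]
          simp only [Nat.cast_add, add_smul, Finset.sum_add_distrib]
          congr 1
          rw [Finset.sum_congr rfl (fun j _ => by
            rw [show ((if j = i then 1 else 0 : ℕ) : ℝ) = if j = i then (1:ℝ) else 0 by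
              split <;> simp, ite_smul, one_smul, zero_smul])]
          simp
        have hinner : ⟪w f, z i⟫ ≤ 0 := by
          have : ⟪w f, z i⟫ = (ℓ i * ⟪w f, y i⟫) / ‖y i‖ := by
            rw [hzdef]; simp only [real_inner_smul_right]; ring
          rw [this]
          exact div_nonpos_of_nonpos_of_nonneg hi (hyn i).le
        have hg1 : ‖w g‖ ^ 2 ≤ ((∑ j, g j : ℕ) : ℝ) := by
          rw [hwg, hsum, norm_add_sq_real, hznorm i, one_pow]
          linarith
        have hg2 : γ * ((∑ j, g j : ℕ) : ℝ) ≤ ⟪w g, wstar⟫ := by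
          rw [hwg, hsum, inner_add_left]
          have h5 := hzw i
          have h6 : γ * (((∑ j, f j : ℕ) : ℝ) + 1) = γ * ((∑ j, f j : ℕ) : ℝ) + γ := by ring
          rw [h6]
          exact add_le_add h2 h5
        apply ih g hg1 hg2
        rw [hsum]
        rw [Nat.cast_succ] at h3
        linarith
  have h0 : w (fun _ => 0) = 0 := by
    rw [hwdef]; simp
  obtain ⟨g, hg1, hg2⟩ := key ⌈(1/γ)^2⌉₊ (fun _ => 0)
    (by rw [h0]; simp) (by rw [h0]; simp)
    (by
      simp only [Finset.sum_const_zero, Nat.cast_zero, zero_add]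
      exact Nat.le_ceil _)
  exact ⟨g, hg1, hg2⟩
end

section
/- In an ε-additive perturbation stable 2-means instance in which both clusters have at least 4 points, every point x satisfies |⟨x − p, u⟩| ≥ εD, where p is the midpoint of the two cluster means, u the unit vector in the intermean direction, and D the intermean distance. In particular, points of C₁ satisfy ⟨x−p,u⟩ ≥ εD and points of C₂ satisfy ⟨x−p,u⟩ ≤ −εD. -/
open RealInnerProductSpace Finset

open Classical in
/-- The mean of cluster `j` in the clustering `c` of the points `x`. -/
noncomputable def clusterMean {d n k : ℕ} (x : Fin n → EuclideanSpace ℝ (Fin d))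
    (c : Fin n → Fin k) (j : Fin k) : EuclideanSpace ℝ (Fin d) :=
  (((Finset.univ.filter (fun i => c i = j)).card : ℝ))⁻¹ •
    ∑ i ∈ Finset.univ.filter (fun i => c i = j), x i

/-- The `k`-means cost of the clustering `c` of the points `x` (each cluster with its mean). -/
noncomputable def kmeansCost {d n k : ℕ} (x : Fin n → EuclideanSpace ℝ (Fin d))
    (c : Fin n → Fin k) : ℝ :=
  ∑ i, ‖x i - clusterMean x c (c i)‖ ^ 2

/-- `c` is an optimal `k`-means clustering of `x`. -/
def IsOptimalClustering {d n k : ℕ} (x : Fin n → EuclideanSpace ℝ (Fin d))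
    (c : Fin n → Fin k) : Prop :=
  ∀ c' : Fin n → Fin k, kmeansCost x c ≤ kmeansCost x c'

/-- `c` is the unique optimal clustering of `x` (up to relabeling of clusters). -/
def IsUniqueOptimalClustering {d n k : ℕ} (x : Fin n → EuclideanSpace ℝ (Fin d))
    (c : Fin n → Fin k) : Prop :=
  IsOptimalClustering x c ∧
    ∀ c' : Fin n → Fin k, IsOptimalClustering x c' → ∀ i j, (c' i = c' j ↔ c i = c j)

/-- `x` with optimal clustering `c` is `ε`-additive perturbation stable with scale `D`:
after moving every point a distance at most `ε·D`, `c` remains an optimal clustering. -/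
def IsAPS {d n k : ℕ} (ε D : ℝ) (x : Fin n → EuclideanSpace ℝ (Fin d))
    (c : Fin n → Fin k) : Prop :=
  ∀ x' : Fin n → EuclideanSpace ℝ (Fin d),
    (∀ i, ‖x' i - x i‖ ≤ ε * D) → IsOptimalClustering x' c

open Classical in

lemma mean_variance_le {d : ℕ} {ι : Type*} (s : Finset ι) (y : ι → EuclideanSpace ℝ (Fin d))
    (z : EuclideanSpace ℝ (Fin d)) :
    ∑ i ∈ s, ‖y i - (s.card : ℝ)⁻¹ • ∑ i ∈ s, y i‖ ^ 2 ≤ ∑ i ∈ s, ‖y i - z‖ ^ 2 := by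
  rcases s.eq_empty_or_nonempty with h | h
  · simp [h]
  set μ := (s.card : ℝ)⁻¹ • ∑ i ∈ s, y i with hμ
  have hcard : (s.card : ℝ) ≠ 0 := Nat.cast_ne_zero.mpr h.card_pos.ne'
  have hzero : ∑ i ∈ s, (y i - μ) = 0 := by
    rw [Finset.sum_sub_distrib, Finset.sum_const, ← Nat.cast_smul_eq_nsmul ℝ, hμ, smul_smul,
      mul_inv_cancel₀ hcard, one_smul, sub_self]
  have hmid : ∑ i ∈ s, 2 * ⟪y i - μ, μ - z⟫ = 0 := by
    rw [← Finset.mul_sum, ← sum_inner, hzero, inner_zero_left, mul_zero]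
  have expand : ∀ i ∈ s, ‖y i - z‖ ^ 2 = ‖y i - μ‖ ^ 2 + 2 * ⟪y i - μ, μ - z⟫ + ‖μ - z‖ ^ 2 :=
    fun i _ => by rw [show y i - z = (y i - μ) + (μ - z) by abel, norm_add_sq_real]
  have key : ∑ i ∈ s, ‖y i - z‖ ^ 2
      = ∑ i ∈ s, ‖y i - μ‖ ^ 2 + (s.card : ℝ) * ‖μ - z‖ ^ 2 := by
    rw [Finset.sum_congr rfl expand, Finset.sum_add_distrib, Finset.sum_add_distrib, hmid,
      Finset.sum_const, nsmul_eq_mul, add_zero]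
  have hpos : 0 ≤ (s.card : ℝ) * ‖μ - z‖ ^ 2 := by positivity
  linarith

lemma kmeansCost_le {d n k : ℕ} (x : Fin n → EuclideanSpace ℝ (Fin d)) (c : Fin n → Fin k)
    (z : Fin k → EuclideanSpace ℝ (Fin d)) :
    kmeansCost x c ≤ ∑ i, ‖x i - z (c i)‖ ^ 2 := by
  unfold kmeansCost
  rw [← Finset.sum_fiberwise univ c (fun i => ‖x i - clusterMean x c (c i)‖ ^ 2),
    ← Finset.sum_fiberwise univ c (fun i => ‖x i - z (c i)‖ ^ 2)]
  refine Finset.sum_le_sum fun j _ => ?_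
  have h1 : ∀ i ∈ univ.filter (fun i => c i = j), ‖x i - clusterMean x c (c i)‖ ^ 2
      = ‖x i - clusterMean x c j‖ ^ 2 := fun i hi => by rw [(Finset.mem_filter.mp hi).2]
  have h2 : ∀ i ∈ univ.filter (fun i => c i = j), ‖x i - z (c i)‖ ^ 2
      = ‖x i - z j‖ ^ 2 := fun i hi => by rw [(Finset.mem_filter.mp hi).2]
  rw [Finset.sum_congr rfl h1, Finset.sum_congr rfl h2]
  exact mean_variance_le _ _ _
lemma aps_margin_aux {d n : ℕ} (ε : ℝ) (hε : 0 < ε)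
    (x : Fin n → EuclideanSpace ℝ (Fin d)) (c : Fin n → Fin 2) (j j' : Fin 2) (hjj : j ≠ j')
    (hsize : 4 ≤ (Finset.univ.filter (fun i => c i = j)).card)
    (hD : 0 < ‖clusterMean x c j - clusterMean x c j'‖)
    (haps : ∀ x' : Fin n → EuclideanSpace ℝ (Fin d),
      (∀ i, ‖x' i - x i‖ ≤ ε * ‖clusterMean x c j - clusterMean x c j'‖) →
        IsOptimalClustering x' c)
    (a : Fin n) (ha : c a = j) :
    ε * ‖clusterMean x c j - clusterMean x c j'‖ ≤
      ⟪x a - (2 : ℝ)⁻¹ • (clusterMean x c j + clusterMean x c j'),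
        ‖clusterMean x c j - clusterMean x c j'‖⁻¹ • (clusterMean x c j - clusterMean x c j')⟫ := by
  set μ := clusterMean x c with hμdef
  set D := ‖μ j - μ j'‖ with hDdef
  set e := μ j - μ j' with hedef
  set v := D⁻¹ • e with hvdef
  set p := (2 : ℝ)⁻¹ • (μ j + μ j') with hpdef
  by_contra hlt
  push_neg at hlt
  have hεD : 0 < ε * D := mul_pos hε hD
  have hne : ∀ q : EuclideanSpace ℝ (Fin d), ⟪q, e⟫ = D * ⟪q, v⟫ := by
    intro q
    rw [hvdef, real_inner_smul_right, ← mul_assoc, mul_inv_cancel₀ hD.ne', one_mul]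
  have hdiff : ∀ q : EuclideanSpace ℝ (Fin d),
      ‖q - μ j'‖ ^ 2 - ‖q - μ j‖ ^ 2 = 2 * ⟪q - p, e⟫ := by
    intro q
    rw [hedef, hpdef]
    simp only [norm_sub_sq_real, inner_sub_left, inner_sub_right, inner_add_left,
      inner_add_right, real_inner_smul_left, real_inner_smul_right,
      real_inner_self_eq_norm_sq, real_inner_comm (μ j') (μ j)]
    ring
  -- the perturbation
  set m := (Finset.univ.filter (fun i => c i = j)).card with hmdef
  have hm1 : 1 ≤ m := le_trans (by norm_num) hsize
  set M : ℝ := (m : ℝ) - 1 with hMdef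
  have hM : 3 ≤ M := by
    have : (4 : ℝ) ≤ (m : ℝ) := by exact_mod_cast hsize
    linarith
  have hM0 : M ≠ 0 := by linarith
  set δ : Fin n → EuclideanSpace ℝ (Fin d) :=
    fun i => if i = a then (-(ε * D)) • v else if c i = j then ((ε * D) / M) • v else 0 with hδdef
  set x' : Fin n → EuclideanSpace ℝ (Fin d) := fun i => x i + δ i with hx'def
  have hvnorm : ‖v‖ = 1 := by
    rw [hvdef, norm_smul, Real.norm_eq_abs, abs_inv, abs_of_pos hD, ← hDdef,
      inv_mul_cancel₀ hD.ne']
  have hδa : δ a = (-(ε * D)) • v := if_pos rfl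
  have hδj : ∀ i, i ≠ a → c i = j → δ i = ((ε * D) / M) • v := by
    intro i hia hcj
    show (if i = a then (-(ε * D)) • v else if c i = j then ((ε * D) / M) • v else 0) = _
    rw [if_neg hia, if_pos hcj]
  have hδzero : ∀ i, c i ≠ j → δ i = 0 := by
    intro i hcj
    have hia : i ≠ a := fun h => hcj (h ▸ ha)
    show (if i = a then (-(ε * D)) • v else if c i = j then ((ε * D) / M) • v else 0) = 0
    rw [if_neg hia, if_neg hcj]
  have hsub : ∀ i, x' i - x i = δ i := fun i => add_sub_cancel_left (x i) (δ i)
  have hmove : ∀ i, ‖x' i - x i‖ ≤ ε * D := by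
    intro i
    rw [hsub i]
    by_cases hia : i = a
    · subst hia
      rw [hδa, norm_smul, hvnorm, mul_one, Real.norm_eq_abs, abs_neg, abs_of_pos hεD]
    · by_cases hcj : c i = j
      · rw [hδj i hia hcj, norm_smul, hvnorm, mul_one, Real.norm_eq_abs,
          abs_of_pos (div_pos hεD (by linarith))]
        rw [div_le_iff₀ (by linarith : (0:ℝ) < M)]
        nlinarith
      · rw [hδzero i hcj, norm_zero]
        exact le_of_lt hεD
  have haC : a ∈ Finset.univ.filter (fun i => c i = j) := by
    simp [Finset.mem_filter, ha]
  have hsumδ : ∑ i ∈ Finset.univ.filter (fun i => c i = j), δ i = 0 := by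
    rw [← Finset.add_sum_erase _ δ haC]
    have hrest : ∀ i ∈ (Finset.univ.filter (fun i => c i = j)).erase a,
        δ i = ((ε * D) / M) • v := fun i hi =>
      hδj i (Finset.ne_of_mem_erase hi) (Finset.mem_filter.mp (Finset.mem_of_mem_erase hi)).2
    rw [Finset.sum_congr rfl hrest, Finset.sum_const,
      Finset.card_erase_of_mem haC, ← Nat.cast_smul_eq_nsmul ℝ, ← hmdef]
    have hcast : ((m - 1 : ℕ) : ℝ) = M := by
      rw [hMdef, Nat.cast_sub hm1, Nat.cast_one]
    rw [hcast, hδa]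
    have h3 : M • ((ε * D / M) • v) = (ε * D) • v := by
      rw [← mul_smul, mul_div_cancel₀ _ hM0]
    rw [h3, neg_smul, neg_add_cancel]
  have hmean : ∀ j'' : Fin 2, clusterMean x' c j'' = μ j'' := by
    intro j''
    have hsum : ∑ i ∈ Finset.univ.filter (fun i => c i = j''), x' i
        = ∑ i ∈ Finset.univ.filter (fun i => c i = j''), x i := by
      have h0 : ∑ i ∈ Finset.univ.filter (fun i => c i = j''), x' i
          = ∑ i ∈ Finset.univ.filter (fun i => c i = j''), x i
            + ∑ i ∈ Finset.univ.filter (fun i => c i = j''), δ i :=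
        Finset.sum_add_distrib
      rw [h0]
      by_cases hj : j'' = j
      · rw [hj, hsumδ, add_zero]
      · have : ∑ i ∈ Finset.univ.filter (fun i => c i = j''), δ i = 0 :=
          Finset.sum_eq_zero fun i hi =>
            hδzero i (by rw [(Finset.mem_filter.mp hi).2]; exact hj)
        rw [this, add_zero]
    rw [hμdef]
    unfold clusterMean
    rw [hsum]
  set c' : Fin n → Fin 2 := Function.update c a j' with hc'def
  have hcost : kmeansCost x' c = ∑ i, ‖x' i - μ (c i)‖ ^ 2 := by
    unfold kmeansCost
    exact Finset.sum_congr rfl fun i _ => by rw [hmean (c i)]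
  have hle : kmeansCost x' c' ≤ ∑ i, ‖x' i - μ (c' i)‖ ^ 2 := kmeansCost_le x' c' μ
  have hsplit : ∑ i, ‖x' i - μ (c' i)‖ ^ 2
      = ∑ i, ‖x' i - μ (c i)‖ ^ 2 + (‖x' a - μ j'‖ ^ 2 - ‖x' a - μ j‖ ^ 2) := by
    rw [← Finset.add_sum_erase _ (fun i => ‖x' i - μ (c' i)‖ ^ 2) (Finset.mem_univ a),
      ← Finset.add_sum_erase _ (fun i => ‖x' i - μ (c i)‖ ^ 2) (Finset.mem_univ a)]
    have herase : ∑ i ∈ Finset.univ.erase a, ‖x' i - μ (c' i)‖ ^ 2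
        = ∑ i ∈ Finset.univ.erase a, ‖x' i - μ (c i)‖ ^ 2 := by
      refine Finset.sum_congr rfl fun i hi => ?_
      rw [hc'def, Function.update_of_ne (Finset.ne_of_mem_erase hi)]
    rw [herase, hc'def, Function.update_self, ha]
    ring
  have hxa : x' a - p = (x a - p) - (ε * D) • v := by
    rw [show x' a = x a + δ a from rfl, hδa]
    module
  have hinner : ⟪x' a - p, e⟫ = D * (⟪x a - p, v⟫ - ε * D) := by
    rw [hxa, inner_sub_left, real_inner_smul_left, hne (x a - p), hne v,
      real_inner_self_eq_norm_sq, hvnorm]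
    ring
  have hneg : ‖x' a - μ j'‖ ^ 2 - ‖x' a - μ j‖ ^ 2 < 0 := by
    rw [hdiff, hinner]
    have h6 : ⟪x a - p, v⟫ - ε * D < 0 := sub_neg.mpr hlt
    exact mul_neg_of_pos_of_neg two_pos (mul_neg_of_pos_of_neg hD h6)
  have hopt' : kmeansCost x' c ≤ kmeansCost x' c' := haps x' hmove c'
  rw [hcost] at hopt'
  rw [hsplit] at hle
  have h5 : (∑ i, ‖x' i - μ (c i)‖ ^ 2)
      ≤ ∑ i, ‖x' i - μ (c i)‖ ^ 2 + (‖x' a - μ j'‖ ^ 2 - ‖x' a - μ j‖ ^ 2) :=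
    hopt'.trans hle
  exact absurd ((le_add_iff_nonneg_right _).mp h5) (not_le.mpr hneg)

open Classical in
/-- Margin condition in an `ε`-APS 2-means instance: every point satisfies
`|⟨x−p,u⟩| ≥ εD`, with points of `C₁` on the positive side and points of `C₂`
on the negative side. -/
theorem aps_two_means_margin {d n : ℕ} (ε : ℝ) (hε : 0 < ε)
    (x : Fin n → EuclideanSpace ℝ (Fin d)) (c : Fin n → Fin 2)
    (hsize : ∀ j : Fin 2, 4 ≤ (Finset.univ.filter (fun i => c i = j)).card)
    (hopt : IsUniqueOptimalClustering x c)
    (haps : IsAPS ε ‖clusterMean x c 0 - clusterMean x c 1‖ x c) :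
    let μ₁ := clusterMean x c 0
    let μ₂ := clusterMean x c 1
    let D := ‖μ₁ - μ₂‖
    let u := D⁻¹ • (μ₁ - μ₂)
    let p := (2 : ℝ)⁻¹ • (μ₁ + μ₂)
    ∀ i : Fin n,
      ε * D ≤ |⟪x i - p, u⟫| ∧
      (c i = 0 → ε * D ≤ ⟪x i - p, u⟫) ∧
      (c i = 1 → ⟪x i - p, u⟫ ≤ -(ε * D)) := by
  intro μ₁ μ₂ D u p i
  rcases eq_or_lt_of_le (norm_nonneg (μ₁ - μ₂)) with hD0 | hD
  · -- degenerate case: the two means coincide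
    have hsub : μ₁ - μ₂ = 0 := norm_eq_zero.mp hD0.symm
    have hu : u = (0 : EuclideanSpace ℝ (Fin d)) := by
      show D⁻¹ • (μ₁ - μ₂) = 0
      rw [hsub, smul_zero]
    have hεD : ε * D = 0 := by
      show ε * ‖μ₁ - μ₂‖ = 0
      rw [hsub, norm_zero, mul_zero]
    rw [hu, hεD]
    simp
  · have htwo : ∀ t : Fin 2, t = 0 ∨ t = 1 := by decide
    rcases htwo (c i) with h0 | h1
    · have key := aps_margin_aux ε hε x c 0 1 (by decide) (hsize 0) hD haps i h0
      refine ⟨le_trans key (le_abs_self _), fun _ => key, fun h1 => ?_⟩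
      rw [h0] at h1
      exact absurd h1 (by decide)
    · have hD' : 0 < ‖clusterMean x c 1 - clusterMean x c 0‖ := by
        rw [norm_sub_rev]; exact hD
      have haps' : ∀ x' : Fin n → EuclideanSpace ℝ (Fin d),
          (∀ i, ‖x' i - x i‖ ≤ ε * ‖clusterMean x c 1 - clusterMean x c 0‖) →
            IsOptimalClustering x' c := by
        intro x' hx'
        refine haps x' fun i' => ?_
        rw [show ‖clusterMean x c 0 - clusterMean x c 1‖
          = ‖clusterMean x c 1 - clusterMean x c 0‖ from norm_sub_rev _ _]
        exact hx' i'
      have key := aps_margin_aux ε hε x c 1 0 (by decide) (hsize 1) hD' haps' i h1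
      have hnorm : ‖clusterMean x c 1 - clusterMean x c 0‖ = D := norm_sub_rev _ _
      have hp : (2 : ℝ)⁻¹ • (clusterMean x c 1 + clusterMean x c 0) = p := by
        show _ = (2 : ℝ)⁻¹ • (μ₁ + μ₂)
        rw [add_comm]
      have hvec : D⁻¹ • (clusterMean x c 1 - clusterMean x c 0) = -u := by
        show D⁻¹ • (μ₂ - μ₁) = -(D⁻¹ • (μ₁ - μ₂))
        rw [← smul_neg, neg_sub]
      rw [hnorm, hp, hvec, inner_neg_right] at key
      have hle : ⟪x i - p, u⟫ ≤ -(ε * D) := by linarith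
      refine ⟨le_trans key (neg_le_abs _), fun h0 => ?_, fun _ => hle⟩
      rw [h1] at h0
      exact absurd h0 (by decide)
end

section
/- In an ε-additive perturbation stable k-means instance, for any two optimal clusters C_i, C_j with means μ_i, μ_j and any point x ∈ C_i ∪ C_j, one has ‖(x−p)_{(V)}‖ ≤ (1/ε)(‖(x−p)_{(u)}‖ − εD_{i,j}), where u is the unit intermean direction, V = u^⊥, p the midpoint of the means, and D_{i,j} the distance between the means. -/
open RealInnerProductSpace Finset

lemma sum_sq_dist_mean_le {E ι : Type*} [NormedAddCommGroup E] [InnerProductSpace ℝ E]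
    (s : Finset ι) (y : ι → E) (b : E) :
    ∑ l ∈ s, ‖y l - (s.card : ℝ)⁻¹ • ∑ m ∈ s, y m‖ ^ 2 ≤ ∑ l ∈ s, ‖y l - b‖ ^ 2 := by
  rcases s.eq_empty_or_nonempty with rfl | hne
  · simp
  set μ : E := (s.card : ℝ)⁻¹ • ∑ m ∈ s, y m with hμ
  have hcard : (s.card : ℝ) ≠ 0 := Nat.cast_ne_zero.mpr hne.card_pos.ne'
  have hsum : ∑ l ∈ s, (y l - μ) = 0 := by
    rw [Finset.sum_sub_distrib, Finset.sum_const, hμ,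
      ← Nat.cast_smul_eq_nsmul ℝ, smul_smul]
    field_simp
    rw [one_smul, sub_self]
  have expand : ∀ l, ‖y l - b‖ ^ 2 = ‖y l - μ‖ ^ 2 + 2 * ⟪y l - μ, μ - b⟫ + ‖μ - b‖ ^ 2 := by
    intro l
    rw [← norm_add_sq_real]
    ring_nf
    rw [sub_add_sub_cancel]
  calc ∑ l ∈ s, ‖y l - μ‖ ^ 2
      ≤ ∑ l ∈ s, ‖y l - μ‖ ^ 2 + (2 * ⟪∑ l ∈ s, (y l - μ), μ - b⟫ + s.card * ‖μ - b‖ ^ 2) := by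
        rw [hsum, inner_zero_left]
        have : (0:ℝ) ≤ s.card * ‖μ - b‖ ^ 2 := by positivity
        linarith
    _ = ∑ l ∈ s, ‖y l - b‖ ^ 2 := by
        rw [sum_inner]
        rw [Finset.sum_congr rfl (fun l _ => expand l)]
        rw [Finset.sum_add_distrib, Finset.sum_add_distrib, Finset.mul_sum, Finset.sum_const,
          nsmul_eq_mul]
        ring

open Classical in
lemma kmeansCost_le_centers {d n k : ℕ} (x : Fin n → EuclideanSpace ℝ (Fin d))
    (c' : Fin n → Fin k) (m : Fin k → EuclideanSpace ℝ (Fin d)) :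
    kmeansCost x c' ≤ ∑ l, ‖x l - m (c' l)‖ ^ 2 := by
  unfold kmeansCost
  rw [← Finset.sum_fiberwise Finset.univ c' (fun l => ‖x l - clusterMean x c' (c' l)‖ ^ 2),
    ← Finset.sum_fiberwise Finset.univ c' (fun l => ‖x l - m (c' l)‖ ^ 2)]
  apply Finset.sum_le_sum
  intro j _
  have h1 : ∀ l ∈ Finset.univ.filter (fun l => c' l = j), c' l = j := by
    intro l hl; exact (Finset.mem_filter.mp hl).2
  calc ∑ l ∈ Finset.univ.filter (fun l => c' l = j), ‖x l - clusterMean x c' (c' l)‖ ^ 2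
      = ∑ l ∈ Finset.univ.filter (fun l => c' l = j), ‖x l - clusterMean x c' j‖ ^ 2 :=
        Finset.sum_congr rfl (fun l hl => by rw [h1 l hl])
    _ ≤ ∑ l ∈ Finset.univ.filter (fun l => c' l = j), ‖x l - m j‖ ^ 2 :=
        sum_sq_dist_mean_le _ _ _
    _ = ∑ l ∈ Finset.univ.filter (fun l => c' l = j), ‖x l - m (c' l)‖ ^ 2 :=
        Finset.sum_congr rfl (fun l hl => by rw [h1 l hl])

open Classical in
lemma not_opt_of_swap {d n k : ℕ} (x : Fin n → EuclideanSpace ℝ (Fin d))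
    (c : Fin n → Fin k) (a : Fin n) (i j : Fin k) (ha : c a = i)
    (hlt : ‖x a - clusterMean x c j‖ < ‖x a - clusterMean x c i‖) :
    ¬ IsOptimalClustering x c := by
  intro hopt
  set c' := Function.update c a j with hc'
  have h1 : kmeansCost x c' ≤ ∑ l, ‖x l - clusterMean x c (c' l)‖ ^ 2 :=
    kmeansCost_le_centers x c' (clusterMean x c)
  have h2 : ∑ l, ‖x l - clusterMean x c (c' l)‖ ^ 2 < kmeansCost x c := by
    unfold kmeansCost
    apply Finset.sum_lt_sum
    · intro l _
      by_cases hl : l = a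
      · subst hl
        rw [hc', Function.update_self, ha]
        have h0 : (0:ℝ) ≤ ‖x l - clusterMean x c j‖ := norm_nonneg _
        nlinarith [norm_nonneg (x l - clusterMean x c i)]
      · rw [hc', Function.update_of_ne hl]
    · refine ⟨a, Finset.mem_univ a, ?_⟩
      rw [hc', Function.update_self, ha]
      nlinarith [norm_nonneg (x a - clusterMean x c j), norm_nonneg (x a - clusterMean x c i)]
  exact absurd (hopt c') (by linarith)

open Classical in
lemma clusterMean_add {d n k : ℕ} (x t : Fin n → EuclideanSpace ℝ (Fin d))
    (c : Fin n → Fin k) (j : Fin k) :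
    clusterMean (fun l => x l + t l) c j = clusterMean x c j +
      (((Finset.univ.filter (fun i => c i = j)).card : ℝ))⁻¹ •
        ∑ l ∈ Finset.univ.filter (fun i => c i = j), t l := by
  unfold clusterMean
  rw [Finset.sum_add_distrib, smul_add]

lemma key_real (ε D h s' v G : ℝ) (hε : 0 < ε) (hD : 0 < D) (hh : 0 < h)
    (h2h : 2 * h ≤ D) (hv0 : 0 ≤ v) (hvG : v ≤ G) (hs'v : s' < ε * v) :
    4 * h * s' < ε ^ 2 * D ^ 2 + 2 * ε * D * G := by
  nlinarith [mul_pos hε hD, mul_lt_mul_of_pos_left hs'v (by positivity : (0:ℝ) < 4 * h),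
    mul_le_mul_of_nonneg_right h2h (mul_nonneg hε.le hv0),
    mul_le_mul_of_nonneg_left hvG (by positivity : (0:ℝ) ≤ 2 * ε * D)]

lemma Gpos_real (ε h s' v G : ℝ) (hε : 0 < ε) (hh : 0 < h) (hG0 : 0 ≤ G)
    (hG2 : G ^ 2 = v ^ 2 + (s' - h) ^ 2) (hv0 : 0 ≤ v) (hs'v : s' < ε * v) : 0 < G := by
  rcases hG0.lt_or_eq with h' | h'
  · exact h'
  exfalso
  have hz : v ^ 2 + (s' - h) ^ 2 = 0 := by rw [← hG2, ← h']; ring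
  have hv2 : v ^ 2 = 0 := le_antisymm (by nlinarith [sq_nonneg (s' - h)]) (sq_nonneg v)
  have hveq : v = 0 := pow_eq_zero_iff (n := 2) (by norm_num) |>.mp hv2
  have hsh : s' = h := by nlinarith [sq_nonneg v]
  rw [hveq, hsh] at hs'v
  simp at hs'v
  linarith

set_option maxHeartbeats 4000000 in
open Classical in
lemma core_margin {d n k : ℕ} (ε D : ℝ) (hε : 0 < ε)
    (x : Fin n → EuclideanSpace ℝ (Fin d)) (c : Fin n → Fin k)
    (hsize : ∀ j : Fin k, 4 ≤ (Finset.univ.filter (fun i => c i = j)).card)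
    (hDub : ∀ i' j' : Fin k, ‖clusterMean x c i' - clusterMean x c j'‖ ≤ D)
    (haps : IsAPS ε D x c)
    (i j : Fin k) (hij : i ≠ j)
    (hμ : clusterMean x c i ≠ clusterMean x c j)
    (a : Fin n) (ha : c a = i) :
    ‖(x a - (2:ℝ)⁻¹ • (clusterMean x c i + clusterMean x c j)) -
        ⟪x a - (2:ℝ)⁻¹ • (clusterMean x c i + clusterMean x c j),
          ‖clusterMean x c i - clusterMean x c j‖⁻¹ •
            (clusterMean x c i - clusterMean x c j)⟫ •
          (‖clusterMean x c i - clusterMean x c j‖⁻¹ •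
            (clusterMean x c i - clusterMean x c j))‖ ≤
      ε⁻¹ * (|⟪x a - (2:ℝ)⁻¹ • (clusterMean x c i + clusterMean x c j),
          ‖clusterMean x c i - clusterMean x c j‖⁻¹ •
            (clusterMean x c i - clusterMean x c j)⟫| -
        ε * ‖clusterMean x c i - clusterMean x c j‖) := by
  set μi := clusterMean x c i with hμi
  set μj := clusterMean x c j with hμj
  set Dij := ‖μi - μj‖ with hDijdef
  set u : EuclideanSpace ℝ (Fin d) := Dij⁻¹ • (μi - μj) with hudef
  set p : EuclideanSpace ℝ (Fin d) := (2:ℝ)⁻¹ • (μi + μj) with hpdef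
  by_contra hcon
  push_neg at hcon
  -- basic positivity facts
  have hDij : 0 < Dij := norm_pos_iff.mpr (sub_ne_zero.mpr hμ)
  have hDijD : Dij ≤ D := hDub i j
  have hD : 0 < D := lt_of_lt_of_le hDij hDijD
  have hu1 : ‖u‖ = 1 := by
    rw [hudef, norm_smul, Real.norm_eq_abs, abs_inv, abs_of_pos hDij, ← hDijdef,
      inv_mul_cancel₀ hDij.ne']
  have huu : ⟪u, u⟫ = (1:ℝ) := by
    rw [real_inner_self_eq_norm_sq, hu1]; norm_num
  have hμiμj : μi - μj = Dij • u := by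
    rw [hudef, smul_smul, mul_inv_cancel₀ hDij.ne', one_smul]
  set h : ℝ := Dij / 2 with hhdef
  have hh : 0 < h := by positivity
  have hμip : μi - p = h • u := by
    rw [hpdef, hhdef, div_eq_mul_inv, mul_comm, ← smul_smul, ← hμiμj]
    module
  have hμjp : μj - p = -(h • u) := by
    rw [hpdef, hhdef, div_eq_mul_inv, mul_comm, ← smul_smul, ← hμiμj]
    module
  -- the moved point
  set s : ℝ := ⟪x a - p, u⟫ with hsdef
  set τ : EuclideanSpace ℝ (Fin d) := -((ε * D) • u) with hτdef
  set A : EuclideanSpace ℝ (Fin d) := x a + τ with hAdef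
  set s' : ℝ := s - ε * D with hs'def
  have hAp : A - p = (x a - p) + τ := by rw [hAdef]; module
  have hs'A : ⟪A - p, u⟫ = s' := by
    rw [hAp, hτdef, inner_add_left, inner_neg_left, real_inner_smul_left, huu, hs'def, hsdef]
    ring
  set w : EuclideanSpace ℝ (Fin d) := (x a - p) - s • u with hwdef
  set v : ℝ := ‖w‖ with hvdef
  have hwA : A - p = w + s' • u := by
    rw [hwdef, hAp, hτdef, hs'def]; module
  have hwu : ⟪w, u⟫ = 0 := by
    rw [hwdef, inner_sub_left, real_inner_smul_left, huu, hsdef]; ring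
  -- violation inequality
  have hvgt : ε⁻¹ * (|s| - ε * Dij) < v := hcon
  have habs : s ≤ |s| := le_abs_self s
  have hs'v : s' < ε * v := by
    have h1 : |s| - ε * Dij < ε * v := by
      have := mul_lt_mul_of_pos_left hvgt hε
      rw [mul_inv_cancel_left₀ hε.ne'] at this
      linarith
    have h2 : ε * Dij ≤ ε * D := by nlinarith
    rw [hs'def]; linarith
  have hv0 : 0 ≤ v := norm_nonneg _
  -- squared distances
  set G : ℝ := ‖A - μi‖ with hGdef
  set g : ℝ := ‖A - μj‖ with hgdef
  have hAμi : A - μi = w + (s' - h) • u := by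
    have : A - μi = (A - p) - (μi - p) := by module
    rw [this, hwA, hμip]; module
  have hAμj : A - μj = w + (s' + h) • u := by
    have : A - μj = (A - p) - (μj - p) := by module
    rw [this, hwA, hμjp]; module
  have hG2 : G ^ 2 = v ^ 2 + (s' - h) ^ 2 := by
    rw [hGdef, hAμi, norm_add_sq_real, real_inner_smul_right, hwu, norm_smul,
      Real.norm_eq_abs, hu1, hvdef]
    rw [mul_one, sq_abs]
    ring
  have hg2 : g ^ 2 = v ^ 2 + (s' + h) ^ 2 := by
    rw [hgdef, hAμj, norm_add_sq_real, real_inner_smul_right, hwu, norm_smul,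
      Real.norm_eq_abs, hu1, hvdef]
    rw [mul_one, sq_abs]
    ring
  have hG0 : 0 ≤ G := norm_nonneg _
  have hg0 : 0 ≤ g := norm_nonneg _
  have hvG : v ≤ G := by
    have hsq : v ^ 2 ≤ G ^ 2 := by nlinarith [sq_nonneg (s' - h)]
    exact le_of_pow_le_pow_left₀ (by norm_num) hG0 hsq
  -- key inequality
  have hkey : g < ε * D + G := by
    have h2h : 2 * h ≤ D := by rw [hhdef]; linarith
    have hk := key_real ε D h s' v G hε hD hh h2h hv0 hvG hs'v
    have hsq : g ^ 2 < (ε * D + G) ^ 2 := by rw [hg2]; nlinarith [hG2]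
    exact lt_of_pow_lt_pow_left₀ 2 (by positivity) hsq
  -- G is positive
  have hGpos : 0 < G := Gpos_real ε h s' v G hε hh hG0 hG2 hv0 hs'v
  -- the perturbation
  set Si := Finset.univ.filter (fun l => c l = i) with hSi
  set Sj := Finset.univ.filter (fun l => c l = j) with hSj
  have haSi : a ∈ Si := by rw [hSi]; simp [ha]
  set κ : ℝ := (Si.card : ℝ) with hκ
  have hκ4 : (4:ℝ) ≤ κ := by rw [hκ]; exact_mod_cast hsize i
  set m1 : ℝ := κ - 1 with hm1
  have hm1pos : 0 < m1 := by rw [hm1]; linarith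
  set r : ℝ := min (ε * D) g with hrdef
  have hr0 : 0 ≤ r := le_min (by positivity) hg0
  have hrg : r ≤ g := min_le_right _ _
  set q : EuclideanSpace ℝ (Fin d) := if g = 0 then 0 else (r / g) • (A - μj) with hqdef
  set t : Fin n → EuclideanSpace ℝ (Fin d) :=
    fun l => if l = a then τ else if c l = i then -(m1⁻¹ • τ) else if c l = j then q else 0
    with htdef
  set x' : Fin n → EuclideanSpace ℝ (Fin d) := fun l => x l + t l with hx'def
  have hτnorm : ‖τ‖ = ε * D := by
    rw [hτdef, norm_neg, norm_smul, Real.norm_eq_abs, hu1, mul_one,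
      abs_of_pos (by positivity)]
  have hqnorm : ‖q‖ = r := by
    by_cases hgz : g = 0
    · rw [hqdef, if_pos hgz, norm_zero, hrdef, hgz]
      exact (min_eq_right (by positivity)).symm
    · have hgpos : 0 < g := lt_of_le_of_ne hg0 (Ne.symm hgz)
      rw [hqdef, if_neg hgz, norm_smul, Real.norm_eq_abs,
        abs_of_nonneg (div_nonneg hr0 hg0), ← hgdef, div_mul_cancel₀ _ hgz]
  have hbound : ∀ l, ‖x' l - x l‖ ≤ ε * D := by
    intro l
    have hxl : x' l - x l = t l := by rw [hx'def]; exact add_sub_cancel_left _ _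
    rw [hxl, htdef]
    by_cases h1 : l = a
    · simp only [if_pos h1]; rw [hτnorm]
    · simp only [if_neg h1]
      by_cases h2 : c l = i
      · simp only [if_pos h2]
        rw [norm_neg, norm_smul, Real.norm_eq_abs, abs_inv, abs_of_pos hm1pos, hτnorm]
        have hinv : m1⁻¹ ≤ 1 := by
          rw [inv_le_one_iff₀]; right; rw [hm1]; linarith
        calc m1⁻¹ * (ε * D) ≤ 1 * (ε * D) :=
              mul_le_mul_of_nonneg_right hinv (by positivity)
          _ = ε * D := one_mul _
      · simp only [if_neg h2]
        by_cases h3 : c l = j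
        · simp only [if_pos h3]; rw [hqnorm, hrdef]; exact min_le_left _ _
        · simp only [if_neg h3, norm_zero]; positivity
  -- means of the perturbed instance
  have hcardSi1 : 1 ≤ Si.card := by have := hsize i; rw [hSi]; omega
  have hsumSi : ∑ l ∈ Si, t l = 0 := by
    have hsplit : ∑ l ∈ Si, t l = t a + ∑ l ∈ Si.erase a, t l :=
      (Finset.add_sum_erase Si t haSi).symm
    have hconst : ∀ l ∈ Si.erase a, t l = -(m1⁻¹ • τ) := by
      intro l hl
      obtain ⟨hne, hmem⟩ := Finset.mem_erase.mp hl
      have hcl : c l = i := by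
        rw [hSi] at hmem; exact (Finset.mem_filter.mp hmem).2
      rw [htdef]; simp only [if_neg hne, if_pos hcl]
    have hta : t a = τ := by rw [htdef]; simp
    have hcard : (((Si.erase a).card : ℕ) : ℝ) = m1 := by
      rw [Finset.card_erase_of_mem haSi, Nat.cast_sub hcardSi1, Nat.cast_one, hm1, hκ]
    rw [hsplit, Finset.sum_congr rfl hconst, Finset.sum_const, hta,
      ← Nat.cast_smul_eq_nsmul ℝ, hcard, smul_neg, smul_smul,
      mul_inv_cancel₀ hm1pos.ne', one_smul, add_neg_cancel]
  have hMi : clusterMean x' c i = μi := by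
    rw [hx'def, clusterMean_add, ← hSi, hsumSi, smul_zero, add_zero, hμi]
  have hcardSj : ((Sj.card : ℕ) : ℝ) ≠ 0 := by
    have := hsize j
    rw [hSj]
    have h4 : 4 ≤ Sj.card := by rw [hSj]; exact this
    rw [← hSj]
    exact_mod_cast (by omega : Sj.card ≠ 0)
  have hsumSj : ∑ l ∈ Sj, t l = (Sj.card : ℕ) • q := by
    have hconst : ∀ l ∈ Sj, t l = q := by
      intro l hl
      have hcl : c l = j := by rw [hSj] at hl; exact (Finset.mem_filter.mp hl).2
      have hne : l ≠ a := by
        intro e; subst e; exact hij (ha.symm.trans hcl)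
      have hci : c l ≠ i := by
        intro e; exact hij (e.symm.trans hcl)
      rw [htdef]; simp only [if_neg hne, if_neg hci, if_pos hcl]
    rw [Finset.sum_congr rfl hconst, Finset.sum_const]
  have hMj : clusterMean x' c j = μj + q := by
    rw [hx'def, clusterMean_add, ← hSj, hsumSj, ← Nat.cast_smul_eq_nsmul ℝ, smul_smul,
      inv_mul_cancel₀ hcardSj, one_smul, hμj]
  have hx'a : x' a = A := by
    have hta : t a = τ := by rw [htdef]; simp
    rw [hx'def, hAdef]
    simp [hta]
  have hlt : ‖x' a - clusterMean x' c j‖ < ‖x' a - clusterMean x' c i‖ := by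
    rw [hx'a, hMi, hMj, ← hGdef]
    by_cases hgz : g = 0
    · have hq0 : q = 0 := by rw [hqdef, if_pos hgz]
      rw [hq0, add_zero, ← hgdef, hgz]
      exact hGpos
    · have hgpos : 0 < g := lt_of_le_of_ne hg0 (Ne.symm hgz)
      have hfac : A - (μj + q) = (1 - r / g) • (A - μj) := by
        rw [hqdef, if_neg hgz]; module
      have hfacnn : 0 ≤ 1 - r / g := sub_nonneg.mpr ((div_le_one hgpos).mpr hrg)
      have hnorm : ‖A - (μj + q)‖ = g - r := by
        rw [hfac, norm_smul, Real.norm_eq_abs, abs_of_nonneg hfacnn, ← hgdef]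
        field_simp
      rw [hnorm]
      rcases le_total (ε * D) g with hle | hle
      · have hre : r = ε * D := by rw [hrdef]; exact min_eq_left hle
        rw [hre]; linarith [hkey]
      · have hre : r = g := by rw [hrdef]; exact min_eq_right hle
        rw [hre, sub_self]; exact hGpos
  exact not_opt_of_swap x' c a i j ha hlt (haps x' hbound)


open Classical in
/-- In an `ε`-APS `k`-means instance, for two clusters `C_i, C_j` and any point
`x ∈ C_i ∪ C_j`: `‖(x−p)_{(V)}‖ ≤ (1/ε)(‖(x−p)_{(u)}‖ − ε·D_{i,j})`. -/
theorem aps_margin_angular_separation {d n k : ℕ} (ε D : ℝ) (hε : 0 < ε)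
    (x : Fin n → EuclideanSpace ℝ (Fin d)) (c : Fin n → Fin k)
    (hsize : ∀ j : Fin k, 4 ≤ (Finset.univ.filter (fun i => c i = j)).card)
    (hopt : IsUniqueOptimalClustering x c)
    (hDub : ∀ i' j' : Fin k, ‖clusterMean x c i' - clusterMean x c j'‖ ≤ D)
    (hDeq : ∃ i' j' : Fin k, i' ≠ j' ∧ D = ‖clusterMean x c i' - clusterMean x c j'‖)
    (haps : IsAPS ε D x c)
    (i j : Fin k) (hij : i ≠ j)
    (hμ : clusterMean x c i ≠ clusterMean x c j) :
    let μi := clusterMean x c i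
    let μj := clusterMean x c j
    let Dij := ‖μi - μj‖
    let u := Dij⁻¹ • (μi - μj)
    let p := (2 : ℝ)⁻¹ • (μi + μj)
    ∀ l : Fin n, (c l = i ∨ c l = j) →
      ‖(x l - p) - ⟪x l - p, u⟫ • u‖ ≤ ε⁻¹ * (|⟪x l - p, u⟫| - ε * Dij) := by
  intro μi μj Dij u p l hl
  rcases hl with hl | hl
  · exact core_margin ε D hε x c hsize hDub haps i j hij hμ l hl
  · have H := core_margin ε D hε x c hsize hDub haps j i hij.symm hμ.symm l hl
    rw [add_comm (clusterMean x c j) (clusterMean x c i),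
      norm_sub_rev (clusterMean x c j) (clusterMean x c i)] at H
    have hu' : ‖clusterMean x c i - clusterMean x c j‖⁻¹ •
        (clusterMean x c j - clusterMean x c i) = -u := by
      show _ = -(Dij⁻¹ • (μi - μj))
      rw [show clusterMean x c j - clusterMean x c i = -(μi - μj) from (neg_sub _ _).symm,
        smul_neg]
    rw [hu'] at H
    simp only [inner_neg_right, smul_neg, neg_smul, neg_neg, abs_neg] at H
    exact H
end

section
/- Let a ∈ C₁ and b ∈ C₂ be points of an ε-APS 2-means instance satisfying ⟨a−p,u⟩ ≤ Δ/2 and ⟨b−p,−u⟩ ≤ Δ/2, where Δ ≤ D/2. Then 2εD ≤ ‖a−b‖ ≤ √((1+ε²)/ε²)·D. -/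
open RealInnerProductSpace Finset

/-- For points `a ∈ C₁`, `b ∈ C₂` near the means (`⟨a−p,u⟩ ≤ Δ/2`, `⟨b−p,−u⟩ ≤ Δ/2`)
in an `ε`-APS 2-means instance (satisfying the margin and angular conditions),
`2εD ≤ ‖a−b‖ ≤ √((1+ε²)/ε²)·D`. -/
theorem delta_approx {d : ℕ} (ε D Δ : ℝ) (hε : 0 < ε) (hD : 0 < D)
    (hΔ : Δ = (1 / 2 - ε) * D)
    (u p : EuclideanSpace ℝ (Fin d)) (hu : ‖u‖ = 1)
    (X : Finset (EuclideanSpace ℝ (Fin d)))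
    (hmargin : ∀ x ∈ X, ε * D ≤ |⟪x - p, u⟫|)
    (hangular : ∀ x ∈ X, (ε / Real.sqrt (1 + ε ^ 2)) * ‖x - p‖ ≤ |⟪x - p, u⟫|)
    (a b : EuclideanSpace ℝ (Fin d)) (ha : a ∈ X) (hb : b ∈ X)
    (hau : ⟪a - p, u⟫ ≤ Δ / 2) (hbu : ⟪b - p, -u⟫ ≤ Δ / 2)
    (haC : 0 < ⟪a - p, u⟫) (hbC : ⟪b - p, u⟫ < 0) :
    2 * ε * D ≤ ‖a - b‖ ∧ ‖a - b‖ ≤ Real.sqrt ((1 + ε ^ 2) / ε ^ 2) * D := by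
  set s := Real.sqrt (1 + ε ^ 2) with hs
  have hs0 : 0 < s := Real.sqrt_pos.mpr (by positivity)
  have hma := hmargin a ha
  have hmb := hmargin b hb
  have haa := hangular a ha
  have hab := hangular b hb
  rw [abs_of_pos haC] at hma haa
  rw [abs_of_neg hbC] at hmb hab
  have hbu' : -⟪b - p, u⟫ ≤ Δ / 2 := by rwa [inner_neg_right] at hbu
  constructor
  · have h1 : ⟪a - b, u⟫ = ⟪a - p, u⟫ - ⟪b - p, u⟫ := by
      rw [← inner_sub_left]; congr 1; abel
    have h2 : ⟪a - b, u⟫ ≤ ‖a - b‖ := by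
      calc ⟪a - b, u⟫ ≤ ‖a - b‖ * ‖u‖ := real_inner_le_norm _ _
        _ = ‖a - b‖ := by rw [hu, mul_one]
    linarith
  · have hrw : Real.sqrt ((1 + ε ^ 2) / ε ^ 2) = s / ε := by
      rw [Real.sqrt_div (by positivity), Real.sqrt_sq hε.le]
    rw [hrw]
    have hna : ‖a - p‖ ≤ s / ε * (Δ / 2) := by
      have h : ε / s * ‖a - p‖ ≤ Δ / 2 := le_trans haa hau
      rw [div_mul_eq_mul_div, div_le_iff₀ hs0] at h
      rw [div_mul_eq_mul_div, le_div_iff₀ hε]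
      nlinarith
    have hnb : ‖b - p‖ ≤ s / ε * (Δ / 2) := by
      have h : ε / s * ‖b - p‖ ≤ Δ / 2 := le_trans hab hbu'
      rw [div_mul_eq_mul_div, div_le_iff₀ hs0] at h
      rw [div_mul_eq_mul_div, le_div_iff₀ hε]
      nlinarith
    have htri : ‖a - b‖ ≤ ‖a - p‖ + ‖b - p‖ := by
      have : a - b = (a - p) - (b - p) := by abel
      rw [this]; exact norm_sub_le _ _
    have hΔD : Δ ≤ D := by nlinarith
    have hse : 0 < s / ε := by positivity
    nlinarith
end

section
/- If two clusters are (ρ,Δ,ε)-separated, then for any x ∈ C_i and y ∈ C_j, ‖x − y‖ ≥ ρ. Consequently, in a graph on the point set where edges join points at distance less than r ≤ ρ, no connected component contains points from two different clusters. -/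
open RealInnerProductSpace Finset Classical

/-- The geometric graph on a finite point set: edges join distinct points at
Euclidean distance less than `r`. -/
def geomGraph {d : ℕ} (P : Finset (EuclideanSpace ℝ (Fin d))) (r : ℝ) :
    SimpleGraph {z // z ∈ P} where
  Adj a b := a ≠ b ∧ dist (a : EuclideanSpace ℝ (Fin d)) (b : EuclideanSpace ℝ (Fin d)) < r
  symm := ⟨fun a b h => ⟨h.1.symm, by rw [dist_comm]; exact h.2⟩⟩
  loopless := ⟨fun a h => h.1 rfl⟩

/-- If two clusters are `(ρ,Δ,ε)`-separated then all cross-cluster distances are at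
least `ρ`; consequently in the graph joining points at distance less than `r ≤ ρ`,
no connected component contains points of both clusters. -/
theorem separated_clusters_far_and_disconnected {d : ℕ} (ρ Δ ε : ℝ)
    (hρ : 0 < ρ) (hΔ : 0 < Δ) (hε : 0 < ε)
    (Ci Cj : Finset (EuclideanSpace ℝ (Fin d)))
    (μi μj : EuclideanSpace ℝ (Fin d)) (hμ : μi ≠ μj)
    (Dij : ℝ) (hDij : Dij = ‖μi - μj‖) (hDρ : ρ + 2 * Δ ≤ Dij)
    (u p : EuclideanSpace ℝ (Fin d))
    (hu : u = Dij⁻¹ • (μi - μj)) (hp : p = (2 : ℝ)⁻¹ • (μi + μj))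
    (hsepi : ∀ x ∈ Ci, Dij / 2 - Δ ≤ ⟪x - p, u⟫ ∧
      ‖(x - p) - ⟪x - p, u⟫ • u‖ ≤ ε⁻¹ * (⟪x - p, u⟫ - (Dij / 2 - Δ)))
    (hsepj : ∀ y ∈ Cj, Dij / 2 - Δ ≤ ⟪y - p, -u⟫ ∧
      ‖(y - p) - ⟪y - p, u⟫ • u‖ ≤ ε⁻¹ * (⟪y - p, -u⟫ - (Dij / 2 - Δ))) :
    (∀ x ∈ Ci, ∀ y ∈ Cj, ρ ≤ ‖x - y‖) ∧
    ∀ r : ℝ, r ≤ ρ →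
      ∀ a b : {z // z ∈ Ci ∪ Cj}, (a : EuclideanSpace ℝ (Fin d)) ∈ Ci →
        (b : EuclideanSpace ℝ (Fin d)) ∈ Cj →
        ¬ (geomGraph (Ci ∪ Cj) r).Reachable a b := by
  have hDpos : 0 < Dij := by linarith
  have hnu : ‖u‖ = 1 := by
    rw [hu, norm_smul, norm_inv, Real.norm_eq_abs, abs_of_pos hDpos, ← hDij]
    field_simp
  have hfar : ∀ x ∈ Ci, ∀ y ∈ Cj, ρ ≤ ‖x - y‖ := by
    intro x hx y hy
    have h1 := (hsepi x hx).1
    have h2 := (hsepj y hy).1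
    rw [inner_neg_right] at h2
    have heq : ⟪x - y, u⟫ = ⟪x - p, u⟫ - ⟪y - p, u⟫ := by
      rw [← inner_sub_left]
      congr 1
      abel
    have hcs : ⟪x - y, u⟫ ≤ ‖x - y‖ := by
      calc ⟪x - y, u⟫ ≤ ‖x - y‖ * ‖u‖ := real_inner_le_norm _ _
        _ = ‖x - y‖ := by rw [hnu, mul_one]
    linarith
  refine ⟨hfar, ?_⟩
  intro r hr a b ha hb hreach
  obtain ⟨w⟩ := hreach
  have key : ∀ (a b : {z // z ∈ Ci ∪ Cj}), (geomGraph (Ci ∪ Cj) r).Walk a b →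
      (a : EuclideanSpace ℝ (Fin d)) ∈ Ci → (b : EuclideanSpace ℝ (Fin d)) ∈ Ci := by
    intro a b w
    induction w with
    | nil => exact id
    | @cons c v b hadj w ih =>
      intro hc
      apply ih
      have hv := v.2
      rw [Finset.mem_union] at hv
      rcases hv with h | h
      · exact h
      · exfalso
        have hcf := hfar _ hc _ h
        have hd := hadj.2
        rw [dist_eq_norm] at hd
        linarith
  have hbCi := key a b w ha
  have := hfar _ hbCi _ hb
  simp only [sub_self, norm_zero] at this
  linarith
end

section
/- In a (ρ,Δ,ε)-separated pair of clusters, the 'nice' region N_{i,j} = {x in the cone of C_i toward C_j : ⟨x−μ_i, u⟩ ≤ Δ} satisfies: every x ∈ N_{i,j} has ‖x − μ_i‖ ≤ Δ/ε, and N_{i,j} ∩ C_i is nonempty. -/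
open RealInnerProductSpace Finset

/-- The nice region `N_{i,j} = {x in the cone of C_i toward C_j : ⟨x−μ_i,u⟩ ≤ Δ}`,
i.e. points with `‖(x−μ_i)_{(V)}‖ ≤ (1/ε)(Δ − ‖(x−μ_i)_{(u)}‖)`, satisfies:
every point of it is within distance `Δ/ε` of `μ_i`, and it contains a point of `C_i`. -/
theorem nice_region_properties {d : ℕ} (ε Δ : ℝ) (hε0 : 0 < ε) (hε1 : ε ≤ 1)
    (hΔ : 0 < Δ) (u : EuclideanSpace ℝ (Fin d)) (hu : ‖u‖ = 1)
    (Ci : Finset (EuclideanSpace ℝ (Fin d))) (hCi : Ci.Nonempty)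
    (μi : EuclideanSpace ℝ (Fin d)) (hμi : μi = ((Ci.card : ℝ))⁻¹ • ∑ x ∈ Ci, x)
    (hcone : ∀ x ∈ Ci,
      ‖(x - (μi - Δ • u)) - ⟪x - (μi - Δ • u), u⟫ • u‖ ≤
        ε⁻¹ * ⟪x - (μi - Δ • u), u⟫) :
    (∀ x : EuclideanSpace ℝ (Fin d),
      ‖(x - μi) - ⟪x - μi, u⟫ • u‖ ≤ ε⁻¹ * (Δ - |⟪x - μi, u⟫|) → ‖x - μi‖ ≤ Δ / ε) ∧
    ∃ x ∈ Ci, ‖(x - μi) - ⟪x - μi, u⟫ • u‖ ≤ ε⁻¹ * (Δ - |⟪x - μi, u⟫|) := by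
  have hεinv : (1:ℝ) ≤ ε⁻¹ := by
    rw [le_inv_comm₀ one_pos hε0]; simpa using hε1
  constructor
  · intro x h
    set w := x - μi with hw
    set t : ℝ := ⟪w, u⟫ with ht
    have h1 : ‖w‖ ≤ ‖w - t • u‖ + ‖t • u‖ := by
      have := norm_add_le (w - t • u) (t • u)
      simpa using this
    have h2 : ‖t • u‖ = |t| := by rw [norm_smul, hu, Real.norm_eq_abs, mul_one]
    have habs : 0 ≤ |t| := abs_nonneg t
    have : ‖w‖ ≤ ε⁻¹ * (Δ - |t|) + |t| := by
      rw [h2] at h1; linarith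
    rw [div_eq_inv_mul]
    nlinarith
  · -- averaging: some x in Ci has ⟪x - μi, u⟫ ≤ 0
    have hcard : (Ci.card : ℝ) ≠ 0 := by
      exact_mod_cast Finset.card_ne_zero_of_mem hCi.choose_spec
    have hsum0 : ∑ x ∈ Ci, (x - μi) = 0 := by
      rw [Finset.sum_sub_distrib, Finset.sum_const, hμi]
      rw [← Nat.cast_smul_eq_nsmul ℝ, smul_smul, mul_inv_cancel₀ hcard, one_smul,
        sub_self]
    have hsum : ∑ x ∈ Ci, ⟪x - μi, u⟫ = 0 := by
      rw [← sum_inner, hsum0, inner_zero_left]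
    obtain ⟨x, hx, hxle⟩ : ∃ x ∈ Ci, ⟪x - μi, u⟫ ≤ 0 := by
      by_contra hcon
      push_neg at hcon
      have : (0:ℝ) < ∑ x ∈ Ci, ⟪x - μi, u⟫ :=
        Finset.sum_pos (fun x hx => hcon x hx) hCi
      linarith [hsum ▸ this]
    refine ⟨x, hx, ?_⟩
    have hc := hcone x hx
    have hv : x - (μi - Δ • u) = (x - μi) + Δ • u := by abel
    have hinner : ⟪x - (μi - Δ • u), u⟫ = ⟪x - μi, u⟫ + Δ := by
      rw [hv, inner_add_left, real_inner_smul_left, real_inner_self_eq_norm_sq, hu]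
      ring
    have hvec : (x - (μi - Δ • u)) - ⟪x - (μi - Δ • u), u⟫ • u
        = (x - μi) - ⟪x - μi, u⟫ • u := by
      rw [hinner, hv, add_smul]; abel
    rw [hvec, hinner] at hc
    have : |⟪x - μi, u⟫| = -⟪x - μi, u⟫ := abs_of_nonpos hxle
    rw [this]
    linarith [hc]
end

section
/- Suppose a_i, a_j ∈ ℝ^d satisfy: ‖(a_i−a_j)_{(u)}‖ ≥ ‖(a_i−a_j)_{(V)}‖/ε, ⟨(a_i+a_j)/2 − p, u⟩ ≤ Δ/2, ‖((a_i+a_j)/2 − p)_{(V)}‖ ≤ Δ/ε, and ⟨a_i − a_j, u⟩ > 0. If ρ ≥ 7Δ, then every x ∈ C_i (satisfying the (ρ,Δ,ε)-separation cone condition with ⟨x−p,u⟩ ≥ ρ/2) satisfies ⟨(x−p) − ((a_i+a_j)/2 − p), a_i − a_j⟩ ≥ (ρ/2 − 3Δ)·‖(a_i−a_j)_{(u)}‖ > 0; in particular x is strictly closer to a_i than to a_j. -/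
open RealInnerProductSpace Finset

/-- Assignment correctness: under the bisector properties and `ρ ≥ 7Δ`, every point
`x` of `C_i` (satisfying the separation cone condition with `⟨x−p,u⟩ ≥ ρ/2`) satisfies
`⟨(x−p) − ((a_i+a_j)/2 − p), a_i − a_j⟩ ≥ (ρ/2 − 3Δ)·‖(a_i−a_j)_{(u)}‖ > 0`;
in particular `x` is strictly closer to `a_i` than to `a_j`. -/
theorem assign_correct {d : ℕ} (ρ Δ ε : ℝ)
    (hε0 : 0 < ε) (hε1 : ε ≤ 1 / 2) (hΔ : 0 < Δ) (hρ : 7 * Δ ≤ ρ)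
    (u p ai aj : EuclideanSpace ℝ (Fin d)) (hu : ‖u‖ = 1)
    (h1 : ‖(ai - aj) - ⟪ai - aj, u⟫ • u‖ / ε ≤ |⟪ai - aj, u⟫|)
    (h2 : ⟪(2 : ℝ)⁻¹ • (ai + aj) - p, u⟫ ≤ Δ / 2)
    (h3 : ‖((2 : ℝ)⁻¹ • (ai + aj) - p) - ⟪(2 : ℝ)⁻¹ • (ai + aj) - p, u⟫ • u‖ ≤ Δ / ε)
    (hpos : 0 < ⟪ai - aj, u⟫)
    (x : EuclideanSpace ℝ (Fin d))
    (hx_u : ρ / 2 ≤ ⟪x - p, u⟫)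
    (hx_V : ‖(x - p) - ⟪x - p, u⟫ • u‖ ≤ ε⁻¹ * (⟪x - p, u⟫ - ρ / 2)) :
    (ρ / 2 - 3 * Δ) * |⟪ai - aj, u⟫| ≤
      ⟪(x - p) - ((2 : ℝ)⁻¹ • (ai + aj) - p), ai - aj⟫ ∧
    0 < ⟪(x - p) - ((2 : ℝ)⁻¹ • (ai + aj) - p), ai - aj⟫ ∧
    ‖x - ai‖ < ‖x - aj‖ := by
  set w := ai - aj with hw
  set m := (2 : ℝ)⁻¹ • (ai + aj) - p with hm
  set y := x - p with hy
  set yV := y - ⟪y, u⟫ • u with hyV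
  set mV := m - ⟪m, u⟫ • u with hmV
  set wV := w - ⟪w, u⟫ • u with hwV
  have huu : ⟪u, u⟫ = 1 := by
    rw [real_inner_self_eq_norm_sq, hu]; norm_num
  have habs : |⟪w, u⟫| = ⟪w, u⟫ := abs_of_pos hpos
  have hwVn : ‖wV‖ ≤ ε * ⟪w, u⟫ := by
    rw [div_le_iff₀ hε0, habs] at h1; linarith [h1]
  have key : ⟪y - m, w⟫ = (⟪y, u⟫ - ⟪m, u⟫) * ⟪w, u⟫ + ⟪yV - mV, wV⟫ := by
    simp only [hyV, hmV, hwV, inner_sub_left, inner_sub_right, real_inner_smul_left,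
      real_inner_smul_right, real_inner_comm u]
    rw [huu]; ring
  have hbd : -((‖yV‖ + ‖mV‖) * ‖wV‖) ≤ ⟪yV - mV, wV⟫ := by
    have := abs_real_inner_le_norm (yV - mV) wV
    have hn : ‖yV - mV‖ ≤ ‖yV‖ + ‖mV‖ := norm_sub_le _ _
    have h0 : (0:ℝ) ≤ ‖wV‖ := norm_nonneg _
    nlinarith [abs_le.mp this]
  have hmain : (ρ / 2 - 3 * Δ) * ⟪w, u⟫ ≤ ⟪y - m, w⟫ := by
    rw [key]
    have hyVn : 0 ≤ ‖yV‖ := norm_nonneg _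
    have hmVn : 0 ≤ ‖mV‖ := norm_nonneg _
    have hwVnn : 0 ≤ ‖wV‖ := norm_nonneg _
    have hprod : (‖yV‖ + ‖mV‖) * ‖wV‖ ≤
        (ε⁻¹ * (⟪y, u⟫ - ρ / 2) + Δ / ε) * (ε * ⟪w, u⟫) := by
      apply mul_le_mul (by linarith) hwVn hwVnn
      have : 0 ≤ ε⁻¹ * (⟪y, u⟫ - ρ / 2) := by
        apply mul_nonneg (inv_pos.mpr hε0).le; linarith
      have : 0 ≤ Δ / ε := le_of_lt (div_pos hΔ hε0)
      linarith
    have heq : (ε⁻¹ * (⟪y, u⟫ - ρ / 2) + Δ / ε) * (ε * ⟪w, u⟫)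
        = (⟪y, u⟫ - ρ / 2 + Δ) * ⟪w, u⟫ := by
      field_simp
    rw [heq] at hprod
    have hI : -((⟪y, u⟫ - ρ / 2 + Δ) * ⟪w, u⟫) ≤ ⟪yV - mV, wV⟫ := by linarith
    have hBW : ⟪m, u⟫ * ⟪w, u⟫ ≤ (Δ / 2) * ⟪w, u⟫ :=
      mul_le_mul_of_nonneg_right h2 hpos.le
    have hΔW : 0 < Δ * ⟪w, u⟫ := mul_pos hΔ hpos
    linarith [hI, hBW, hΔW]
  have hposρ : 0 < ρ / 2 - 3 * Δ := by linarith
  have hlt : 0 < ⟪y - m, w⟫ := lt_of_lt_of_le (mul_pos hposρ hpos) hmain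
  refine ⟨by rw [habs]; exact hmain, hlt, ?_⟩
  have hsq : ‖x - aj‖ ^ 2 - ‖x - ai‖ ^ 2 = 2 * ⟪y - m, w⟫ := by
    rw [hy, hm, hw]
    rw [← real_inner_self_eq_norm_sq, ← real_inner_self_eq_norm_sq]
    simp only [inner_sub_left, inner_sub_right, inner_add_left, inner_add_right,
      real_inner_smul_left, real_inner_smul_right]
    rw [real_inner_comm x ai, real_inner_comm x aj, real_inner_comm ai aj]
    ring
  have : ‖x - ai‖ ^ 2 < ‖x - aj‖ ^ 2 := by linarith
  exact lt_of_pow_lt_pow_left₀ 2 (norm_nonneg _) this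
end

section
/- In the robust setting, the extended nice region Ñ_{i,j} = {x in the cone of C_i toward C_j : ⟨x−μ_i,u⟩ ≤ αΔ} has diameter at most (α+1)·2Δ/ε, and by averaging |Ñ_{i,j} ∩ C_i| ≥ (α/(α+1))·|C_i|. -/
open RealInnerProductSpace Finset Classical

/-- The extended nice region `Ñ_{i,j} = {x in the cone of C_i toward C_j : ⟨x−μ_i,u⟩ ≤ αΔ}`
has diameter at most `2(α+1)Δ/ε + 2αΔ`, and contains at least an `α/(α+1)` fraction of
the points of `C_i`. -/
theorem extended_nice_region_properties {d : ℕ} (α Δ ε : ℝ)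
    (hα : 1 ≤ α) (hΔ : 0 < Δ) (hε0 : 0 < ε) (hε1 : ε ≤ 1)
    (u : EuclideanSpace ℝ (Fin d)) (hu : ‖u‖ = 1)
    (Ci : Finset (EuclideanSpace ℝ (Fin d))) (hCi : Ci.Nonempty)
    (μi : EuclideanSpace ℝ (Fin d)) (hμi : μi = ((Ci.card : ℝ))⁻¹ • ∑ x ∈ Ci, x)
    (cone : EuclideanSpace ℝ (Fin d) → Prop)
    (hcone_def : ∀ x, cone x ↔
      (‖(x - (μi - Δ • u)) - ⟪x - (μi - Δ • u), u⟫ • u‖ ≤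
          ε⁻¹ * ⟪x - (μi - Δ • u), u⟫ ∧ -Δ ≤ ⟪x - μi, u⟫))
    (hCi_cone : ∀ x ∈ Ci, cone x) :
    (∀ x y : EuclideanSpace ℝ (Fin d),
      cone x → ⟪x - μi, u⟫ ≤ α * Δ → cone y → ⟪y - μi, u⟫ ≤ α * Δ →
      ‖x - y‖ ≤ 2 * (α + 1) * Δ / ε + 2 * α * Δ) ∧
    (α / (α + 1)) * Ci.card ≤
      ((Ci.filter (fun x => cone x ∧ ⟪x - μi, u⟫ ≤ α * Δ)).card : ℝ) := by
  have hu2 : ⟪u, u⟫ = (1 : ℝ) := by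
    rw [real_inner_self_eq_norm_sq, hu]; norm_num
  constructor
  · -- diameter bound
    have key : ∀ x, cone x → ⟪x - μi, u⟫ ≤ α * Δ →
        ‖x - μi‖ ≤ (α + 1) * Δ / ε + α * Δ := by
      intro x hx hxa
      obtain ⟨h1, h2⟩ := (hcone_def x).1 hx
      set z := x - (μi - Δ • u) with hz
      have hzu : ⟪z, u⟫ = ⟪x - μi, u⟫ + Δ := by
        simp only [hz, sub_sub_eq_add_sub, inner_sub_left, inner_add_left,
          inner_smul_left, hu2, RCLike.star_def, conj_trivial]
        ring
      have hdecomp : x - μi = (z - ⟪z, u⟫ • u) + ⟪x - μi, u⟫ • u := by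
        rw [hzu, hz]
        module
      have habs : |⟪x - μi, u⟫| ≤ α * Δ := by
        rw [abs_le]
        constructor
        · nlinarith
        · exact hxa
      have hperp : ‖z - ⟪z, u⟫ • u‖ ≤ ε⁻¹ * ((α + 1) * Δ) := by
        refine h1.trans ?_
        have : ⟪z, u⟫ ≤ (α + 1) * Δ := by rw [hzu]; linarith
        have hε : (0:ℝ) ≤ ε⁻¹ := by positivity
        nlinarith
      have hstep : ‖x - μi‖ ≤ ‖(z - ⟪z, u⟫ • u : EuclideanSpace ℝ (Fin d))‖ + ‖((⟪x - μi, u⟫ : ℝ) • u : EuclideanSpace ℝ (Fin d))‖ := by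
        have h := norm_add_le (z - ⟪z, u⟫ • u) ((⟪x - μi, u⟫ : ℝ) • u)
        rw [← hdecomp] at h
        exact h
      have hnorm2 : ‖(⟪x - μi, u⟫ : ℝ) • u‖ = |⟪x - μi, u⟫| := by
        rw [norm_smul, hu, mul_one, Real.norm_eq_abs]
      rw [hnorm2] at hstep
      have : (α + 1) * Δ / ε = ε⁻¹ * ((α + 1) * Δ) := by rw [div_eq_inv_mul]
      rw [this]
      linarith
    intro x y hx hxa hy hya
    have h1 := key x hx hxa
    have h2 := key y hy hya
    have : ‖x - y‖ ≤ ‖x - μi‖ + ‖y - μi‖ := by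
      have := norm_sub_le (x - μi) (y - μi)
      simpa [sub_sub_sub_cancel_right] using this
    have heq : 2 * (α + 1) * Δ / ε + 2 * α * Δ
        = ((α + 1) * Δ / ε + α * Δ) + ((α + 1) * Δ / ε + α * Δ) := by
      ring
    rw [heq]
    linarith
  · -- counting bound
    have hn : (0:ℝ) < (Ci.card : ℝ) := by
      exact_mod_cast Finset.card_pos.mpr hCi
    have hsum0 : ∑ x ∈ Ci, ⟪x - μi, u⟫ = 0 := by
      rw [← sum_inner]
      have : ∑ x ∈ Ci, (x - μi) = 0 := by
        rw [Finset.sum_sub_distrib, Finset.sum_const, sub_eq_zero, hμi,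
          ← Nat.cast_smul_eq_nsmul ℝ, smul_smul,
          mul_inv_cancel₀ (ne_of_gt hn), one_smul]
      rw [this, inner_zero_left]
    set P : EuclideanSpace ℝ (Fin d) → Prop := fun x => ⟪x - μi, u⟫ ≤ α * Δ with hP
    have hfilter : Ci.filter (fun x => cone x ∧ ⟪x - μi, u⟫ ≤ α * Δ)
        = Ci.filter P := by
      apply Finset.filter_congr
      intro x hx
      simp [hP, hCi_cone x hx]
    rw [hfilter]
    set m : ℕ := (Ci.filter P).card with hm
    have hcard : (Ci.filter (fun x => ¬ P x)).card = Ci.card - m := by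
      rw [hm, Finset.card_filter_add_card_filter_not (p := P) (s := Ci) |>.symm]
      omega
    have hsplit : ∑ x ∈ Ci.filter P, ⟪x - μi, u⟫
        + ∑ x ∈ Ci.filter (fun x => ¬ P x), ⟪x - μi, u⟫ = 0 := by
      rw [Finset.sum_filter_add_sum_filter_not]
      exact hsum0
    have hlow : (m : ℝ) * (-Δ) ≤ ∑ x ∈ Ci.filter P, ⟪x - μi, u⟫ := by
      rw [hm]
      calc ((Ci.filter P).card : ℝ) * (-Δ)
          = ∑ _x ∈ Ci.filter P, (-Δ) := by rw [Finset.sum_const, nsmul_eq_mul]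
        _ ≤ _ := by
            apply Finset.sum_le_sum
            intro x hx
            exact ((hcone_def x).1 (hCi_cone x (Finset.mem_filter.1 hx).1)).2
    have hhigh : ((Ci.card - m : ℕ) : ℝ) * (α * Δ)
        ≤ ∑ x ∈ Ci.filter (fun x => ¬ P x), ⟪x - μi, u⟫ := by
      rw [← hcard]
      calc ((Ci.filter (fun x => ¬ P x)).card : ℝ) * (α * Δ)
          = ∑ _x ∈ Ci.filter (fun x => ¬ P x), (α * Δ) := by
            rw [Finset.sum_const, nsmul_eq_mul]
        _ ≤ _ := by
            apply Finset.sum_le_sum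
            intro x hx
            have := (Finset.mem_filter.1 hx).2
            simp only [hP, not_le] at this
            linarith
    have hmle : m ≤ Ci.card := by
      rw [hm]; exact Finset.card_filter_le _ _
    have hcast : ((Ci.card - m : ℕ) : ℝ) = (Ci.card : ℝ) - m := by
      exact Nat.cast_sub hmle
    rw [hcast] at hhigh
    rw [div_mul_eq_mul_div, div_le_iff₀ (by linarith)]
    nlinarith [Finset.card_pos.mpr hCi]
end

section
/- Robust bisector properties: if ρ ≥ 2r + (2/ε)((α+1)Δ/ε + r), then for a_i within distance r of the extended nice region of C_i toward C_j and a_j within distance r of the extended nice region of C_j toward C_i: (1) ‖(a_i−a_j)_{(u)}‖ ≥ ‖(a_i−a_j)_{(V)}‖/ε; (2) ⟨(a_i+a_j)/2 − p, u⟩ ≤ (α+1)Δ/2 + r; (3) ‖((a_i+a_j)/2 − p)_{(V)}‖ ≤ (α+1)Δ/ε + r. -/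
open RealInnerProductSpace Finset

/-- Robust bisector properties: if `ρ ≥ 2r + (2/ε)((α+1)Δ/ε + r)`, then for `a_i`
within distance `r` of the extended nice region of `C_i` toward `C_j` and `a_j`
within distance `r` of that of `C_j` toward `C_i` (so that the listed projection
bounds hold): (1) `‖(a_i−a_j)_{(u)}‖ ≥ ‖(a_i−a_j)_{(V)}‖/ε`;
(2) `⟨(a_i+a_j)/2 − p, u⟩ ≤ (α+1)Δ/2 + r`;
(3) `‖((a_i+a_j)/2 − p)_{(V)}‖ ≤ (α+1)Δ/ε + r`. -/
theorem robust_bisector_properties {d : ℕ} (ρ Δ ε α r Dij : ℝ)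
    (hε0 : 0 < ε) (hε1 : ε ≤ 1) (hΔ : 0 < Δ) (hα : 1 ≤ α) (hr : 0 < r)
    (hρ : 2 * r + (2 / ε) * ((α + 1) * Δ / ε + r) ≤ ρ)
    (hDij : ρ + 2 * Δ ≤ Dij)
    (u p ai aj : EuclideanSpace ℝ (Fin d)) (hu : ‖u‖ = 1)
    (hgap : ρ - 2 * r ≤ ⟪ai - aj, u⟫)
    (hV : ‖(ai - aj) - ⟪ai - aj, u⟫ • u‖ ≤ 2 * ((α + 1) * Δ / ε + r))
    (hai_u : ⟪ai - p, u⟫ ≤ Dij / 2 + α * Δ + r)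
    (haj_u : ⟪aj - p, u⟫ ≤ -(Dij / 2) + Δ + r)
    (hai_V : ‖(ai - p) - ⟪ai - p, u⟫ • u‖ ≤ (α + 1) * Δ / ε + r)
    (haj_V : ‖(aj - p) - ⟪aj - p, u⟫ • u‖ ≤ (α + 1) * Δ / ε + r) :
    ‖(ai - aj) - ⟪ai - aj, u⟫ • u‖ / ε ≤ |⟪ai - aj, u⟫| ∧
    ⟪(2 : ℝ)⁻¹ • (ai + aj) - p, u⟫ ≤ (α + 1) * Δ / 2 + r ∧
    ‖((2 : ℝ)⁻¹ • (ai + aj) - p) - ⟪(2 : ℝ)⁻¹ • (ai + aj) - p, u⟫ • u‖ ≤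
      (α + 1) * Δ / ε + r := by

  set B : ℝ := (α + 1) * Δ / ε + r with hB
  have hB0 : 0 ≤ B := by
    have : 0 < (α + 1) * Δ / ε := by positivity
    simp [hB]; nlinarith
  have hmid : (2 : ℝ)⁻¹ • (ai + aj) - p = (2 : ℝ)⁻¹ • ((ai - p) + (aj - p)) := by
    module
  have hmidu : ⟪(2 : ℝ)⁻¹ • (ai + aj) - p, u⟫ =
      (2 : ℝ)⁻¹ * (⟪ai - p, u⟫ + ⟪aj - p, u⟫) := by
    rw [hmid, real_inner_smul_left, inner_add_left]
  refine ⟨?_, ?_, ?_⟩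
  · have hpos : (2 / ε) * B ≤ ⟪ai - aj, u⟫ := by linarith
    have h1 : ‖(ai - aj) - ⟪ai - aj, u⟫ • u‖ / ε ≤ 2 * B / ε := by
      apply div_le_div_of_nonneg_right hV hε0.le |>.trans_eq rfl
    have h2 : 2 * B / ε = (2 / ε) * B := by ring
    have h3 : ⟪ai - aj, u⟫ ≤ |⟪ai - aj, u⟫| := le_abs_self _
    linarith
  · rw [hmidu]; linarith
  · rw [hmid]
    have key : ((2 : ℝ)⁻¹ • ((ai - p) + (aj - p))) -
        ⟪(2 : ℝ)⁻¹ • ((ai - p) + (aj - p)), u⟫ • u =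
        (2 : ℝ)⁻¹ • (((ai - p) - ⟪ai - p, u⟫ • u) + ((aj - p) - ⟪aj - p, u⟫ • u)) := by
      rw [real_inner_smul_left, inner_add_left]
      module
    rw [key, norm_smul]
    have htri := norm_add_le ((ai - p) - ⟪ai - p, u⟫ • u) ((aj - p) - ⟪aj - p, u⟫ • u)
    have : ‖(2 : ℝ)⁻¹‖ = (2 : ℝ)⁻¹ := by norm_num
    rw [this]
    calc (2:ℝ)⁻¹ * ‖((ai - p) - ⟪ai - p, u⟫ • u) + ((aj - p) - ⟪aj - p, u⟫ • u)‖
        ≤ (2:ℝ)⁻¹ * (‖(ai - p) - ⟪ai - p, u⟫ • u‖ + ‖(aj - p) - ⟪aj - p, u⟫ • u‖) := by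
          gcongr
      _ ≤ (2:ℝ)⁻¹ * (B + B) := by gcongr
      _ = B := by ring
end

section
/- Robust assignment correctness: under the robust bisector properties (1)-(3) with parameters α, Δ, ε, r, and for ρ/2 ≥ (3/2)(α+1)Δ + (1+ε)r, every point x with ⟨x−p,u⟩ ≥ ρ/2 and ‖(x−p)_{(V)}‖ ≤ (1/ε)(⟨x−p,u⟩ − ρ/2) satisfies ⟨(x−p) − ((a_i+a_j)/2 − p), a_i−a_j⟩ ≥ (ρ/2 − (3/2)(α+1)Δ − (1+ε)r)·‖(a_i−a_j)_{(u)}‖ ≥ 0, i.e., x is closer to a_i than to a_j. -/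
open RealInnerProductSpace Finset

private lemma decomp_inner {d : ℕ} (u a b : EuclideanSpace ℝ (Fin d)) (hu : ⟪u, u⟫ = (1:ℝ)) :
    ⟪a, b⟫ = ⟪a - ⟪a, u⟫ • u, b - ⟪b, u⟫ • u⟫ + ⟪a, u⟫ * ⟪b, u⟫ := by
  simp only [inner_sub_left, inner_sub_right, real_inner_smul_left, real_inner_smul_right, hu]
  rw [real_inner_comm u b]
  ring

set_option maxHeartbeats 1000000 in
/-- Robust assignment correctness: under the robust bisector properties and
`ρ/2 ≥ (3/2)(α+1)Δ + (1+ε)r`, every point `x` with `⟨x−p,u⟩ ≥ ρ/2` and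
`‖(x−p)_{(V)}‖ ≤ (1/ε)(⟨x−p,u⟩ − ρ/2)` satisfies
`⟨(x−p) − ((a_i+a_j)/2 − p), a_i−a_j⟩ ≥ (ρ/2 − (3/2)(α+1)Δ − (1+ε)r)·‖(a_i−a_j)_{(u)}‖ ≥ 0`,
i.e. `x` is closer to `a_i` than to `a_j`. -/
theorem robust_assign_correct {d : ℕ} (ρ Δ ε α r : ℝ)
    (hε0 : 0 < ε) (hε1 : ε ≤ 1) (hΔ : 0 < Δ) (hα : 1 ≤ α) (hr : 0 < r) (hρ0 : 0 < ρ)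
    (hρ : (3 / 2) * (α + 1) * Δ + (1 + ε) * r ≤ ρ / 2)
    (u p ai aj : EuclideanSpace ℝ (Fin d)) (hu : ‖u‖ = 1)
    (hpos : 0 < ⟪ai - aj, u⟫)
    (h1 : ‖(ai - aj) - ⟪ai - aj, u⟫ • u‖ / ε ≤ |⟪ai - aj, u⟫|)
    (h2 : ⟪(2 : ℝ)⁻¹ • (ai + aj) - p, u⟫ ≤ (α + 1) * Δ / 2 + r)
    (h3 : ‖((2 : ℝ)⁻¹ • (ai + aj) - p) - ⟪(2 : ℝ)⁻¹ • (ai + aj) - p, u⟫ • u‖ ≤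
      (α + 1) * Δ / ε + r)
    (x : EuclideanSpace ℝ (Fin d))
    (hx_u : ρ / 2 ≤ ⟪x - p, u⟫)
    (hx_V : ‖(x - p) - ⟪x - p, u⟫ • u‖ ≤ ε⁻¹ * (⟪x - p, u⟫ - ρ / 2)) :
    (ρ / 2 - (3 / 2) * (α + 1) * Δ - (1 + ε) * r) * |⟪ai - aj, u⟫| ≤
      ⟪(x - p) - ((2 : ℝ)⁻¹ • (ai + aj) - p), ai - aj⟫ ∧
    0 ≤ ⟪(x - p) - ((2 : ℝ)⁻¹ • (ai + aj) - p), ai - aj⟫ ∧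
    ‖x - ai‖ ≤ ‖x - aj‖ := by
  have huu : ⟪u, u⟫ = (1:ℝ) := by
    rw [real_inner_self_eq_norm_sq, hu]; norm_num
  set y : EuclideanSpace ℝ (Fin d) := x - p with hy
  set m : EuclideanSpace ℝ (Fin d) := (2 : ℝ)⁻¹ • (ai + aj) - p with hm
  set w : EuclideanSpace ℝ (Fin d) := ai - aj with hw
  set c := ⟪w, u⟫ with hc
  set t := ⟪y, u⟫ with ht
  set s := ⟪m, u⟫ with hs
  have hcabs : |c| = c := abs_of_pos hpos
  -- decomposition of the inner product
  have hym : ⟪y - m, u⟫ = t - s := by rw [inner_sub_left]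
  have hkey : ⟪y - m, w⟫ = ⟪(y - t • u) - (m - s • u), w - c • u⟫ + (t - s) * c := by
    have := decomp_inner u (y - m) w huu
    rw [hym] at this
    rw [this]
    congr 2
    · rw [sub_smul]; abel
  -- norm bound on w - c•u
  have hwV : ‖w - c • u‖ ≤ ε * c := by
    have := (div_le_iff₀ hε0).mp h1
    rw [hcabs] at this; linarith
  -- bound cross term
  have hcross : -((ε⁻¹ * (t - ρ / 2) + ((α + 1) * Δ / ε + r)) * (ε * c)) ≤
      ⟪(y - t • u) - (m - s • u), w - c • u⟫ := by
    have hC : ‖(y - t • u) - (m - s • u)‖ ≤ ε⁻¹ * (t - ρ / 2) + ((α + 1) * Δ / ε + r) :=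
      le_trans (norm_sub_le _ _) (add_le_add hx_V h3)
    have hCS := neg_le_of_abs_le (abs_real_inner_le_norm ((y - t • u) - (m - s • u)) (w - c • u))
    have hmul : ‖(y - t • u) - (m - s • u)‖ * ‖w - c • u‖ ≤
        (ε⁻¹ * (t - ρ / 2) + ((α + 1) * Δ / ε + r)) * (ε * c) :=
      mul_le_mul hC hwV (norm_nonneg _) (add_nonneg (mul_nonneg (inv_nonneg.mpr hε0.le) (by linarith)) (by positivity))
    linarith
  -- simplify the product
  have hprod : (ε⁻¹ * (t - ρ / 2) + ((α + 1) * Δ / ε + r)) * (ε * c) =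
      ((t - ρ / 2) + (α + 1) * Δ + ε * r) * c := by
    field_simp
    ring
  have hmain : (ρ / 2 - (3 / 2) * (α + 1) * Δ - (1 + ε) * r) * c ≤ ⟪y - m, w⟫ := by
    rw [hkey]
    rw [hprod] at hcross
    have hsc : s * c ≤ ((α + 1) * Δ / 2 + r) * c :=
      mul_le_mul_of_nonneg_right h2 hpos.le
    nlinarith
  have h0 : (0:ℝ) ≤ (ρ / 2 - (3 / 2) * (α + 1) * Δ - (1 + ε) * r) * c :=
    mul_nonneg (by linarith) hpos.le
  refine ⟨by rwa [hcabs], le_trans h0 hmain, ?_⟩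
  have hai : x - ai = (y - m) - (2:ℝ)⁻¹ • w := by
    rw [hy, hm, hw, smul_sub, smul_add]
    module
  have haj : x - aj = (y - m) + (2:ℝ)⁻¹ • w := by
    rw [hy, hm, hw, smul_sub, smul_add]
    module
  have hsq : ‖x - ai‖ ^ 2 ≤ ‖x - aj‖ ^ 2 := by
    rw [hai, haj, norm_sub_sq_real, norm_add_sq_real, real_inner_smul_right]
    nlinarith [le_trans h0 hmain]
  nlinarith [norm_nonneg (x - ai), norm_nonneg (x - aj)]
end
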